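/- arXiv:1406.0544 — 2 statements merged into one kernel-verified Lean document; each statement's English description precedes it below -/
import Mathlib

section
/- Let p ∈ ℤ and let a⃗ = (a₁,…,a_n) be a sequence of positive integers (n ≥ 0) such that one of the following holds: (i) n ≤ 1; (ii) a⃗ = (1,1) and p is even; (iii) n ≡ p (mod 2) and a_i ≥ 2 for all i. Let X(p,a⃗) = Δ^p σ₁^{a₁} σ₂^{a₂} σ₁^{a₃} σ₂^{a₄} ⋯ ∈ Br₃ (n alternating factors). If p < 0 and X(p,a⃗) is quasipositive, then 0 < p + n < 2·e(X(p,a⃗)). -/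
/-- The defining relation `σ₁σ₂σ₁ = σ₂σ₁σ₂` of the braid group on 3 strings. -/
def braidRel3 : Set (FreeGroup (Fin 2)) :=
  {FreeGroup.of 0 * FreeGroup.of 1 * FreeGroup.of 0 *
    (FreeGroup.of 1 * FreeGroup.of 0 * FreeGroup.of 1)⁻¹}

/-- The braid group `Br₃` on 3 strings. -/
abbrev BraidGroup3 : Type := PresentedGroup braidRel3

/-- The standard generators `σ₁, σ₂` of `Br₃` (indexed by `Fin 2`). -/
def sigma (i : Fin 2) : BraidGroup3 := PresentedGroup.of i

/-- The Garside element `Δ = σ₁σ₂σ₁` of `Br₃`. -/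
def braidDelta : BraidGroup3 := sigma 0 * sigma 1 * sigma 0

/-- A braid is quasipositive if it is a product of conjugates of the standard generators. -/
def Quasipositive (X : BraidGroup3) : Prop :=
  X ∈ Submonoid.closure
    {g : BraidGroup3 | ∃ (w : BraidGroup3) (i : Fin 2), g = w⁻¹ * sigma i * w}

/-- The alternating product `g^{a₁} h^{a₂} g^{a₃} h^{a₄} ⋯`. -/
def altFactors {M : Type*} [Monoid M] (g h : M) : List ℕ → M
  | [] => 1
  | a :: t => g ^ a * altFactors h g t

/-- The braid `X(p, a⃗) = Δ^p σ₁^{a₁} σ₂^{a₂} σ₁^{a₃} ⋯ ∈ Br₃`. -/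
def Xbraid (p : ℤ) (as : List ℕ) : BraidGroup3 :=
  braidDelta ^ p * altFactors (sigma 0) (sigma 1) as

namespace BrGeo

def octF (a b : ℤ) : ℤ :=
  if a > 0 ∧ b ≤ 0 ∧ a + b > 0 then 0
  else if a > 0 ∧ b < 0 ∧ a + b ≤ 0 then 1
  else if a ≤ 0 ∧ b < 0 ∧ b < a then 2
  else if a < 0 ∧ b < 0 ∧ a ≤ b then 3
  else if a < 0 ∧ b ≥ 0 ∧ a + b < 0 then 4
  else if a < 0 ∧ b > 0 ∧ a + b ≥ 0 then 5
  else if a ≥ 0 ∧ b > 0 ∧ a < b then 6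
  else 7

variable {a b : ℤ}

lemma octF0 : octF a b = 0 ↔ a > 0 ∧ b ≤ 0 ∧ a + b > 0 := by
  unfold octF; split_ifs <;> omega
lemma octF1 : octF a b = 1 ↔ a > 0 ∧ b < 0 ∧ a + b ≤ 0 := by
  unfold octF; split_ifs <;> omega
lemma octF2 : octF a b = 2 ↔ a ≤ 0 ∧ b < 0 ∧ b < a := by
  unfold octF; split_ifs <;> omega
lemma octF3 : octF a b = 3 ↔ a < 0 ∧ b < 0 ∧ a ≤ b := by
  unfold octF; split_ifs <;> omega
lemma octF4 : octF a b = 4 ↔ a < 0 ∧ b ≥ 0 ∧ a + b < 0 := by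
  unfold octF; split_ifs <;> omega
lemma octF5 : octF a b = 5 ↔ a < 0 ∧ b > 0 ∧ a + b ≥ 0 := by
  unfold octF; split_ifs <;> omega
lemma octF6 : octF a b = 6 ↔ a ≥ 0 ∧ b > 0 ∧ a < b := by
  unfold octF; split_ifs <;> omega
lemma octF7 (h : ¬(a = 0 ∧ b = 0)) : octF a b = 7 ↔ a > 0 ∧ b > 0 ∧ b ≤ a := by
  unfold octF; split_ifs <;> omega

lemma octF_range : 0 ≤ octF a b ∧ octF a b ≤ 7 := by
  unfold octF; split_ifs <;> omega

end BrGeo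


namespace BrGeo

variable {a b c d : ℤ}

-- A transitions
lemma tA0 (h : octF a b = 0) : octF (a+b) b = 0 ∨ octF (a+b) b = 1 := by
  rw [octF0] at h
  rcases le_or_gt (a+b+b) 0 with hc | hc
  · right; rw [octF1]; omega
  · left; rw [octF0]; omega
lemma tA1 (h : octF a b = 1) : octF (a+b) b = 2 := by
  rw [octF1] at h; rw [octF2]; omega
lemma tA2 (h : octF a b = 2) : octF (a+b) b = 3 := by
  rw [octF2] at h; rw [octF3]; omega
lemma tA3 (h : octF a b = 3) : octF (a+b) b = 3 := by
  rw [octF3] at h; rw [octF3]; omega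
lemma tA4 (h : octF a b = 4) : octF (a+b) b = 4 ∨ octF (a+b) b = 5 := by
  rw [octF4] at h
  rcases le_or_gt 0 (a+b+b) with hc | hc
  · right; rw [octF5]; omega
  · left; rw [octF4]; omega
lemma tA5 (h : octF a b = 5) : octF (a+b) b = 6 := by
  rw [octF5] at h; rw [octF6]; omega
lemma tA6 (h : octF a b = 6) : octF (a+b) b = 7 := by
  rw [octF6] at h; rw [octF7 (by omega)]; omega
lemma tA7 (h : ¬(a = 0 ∧ b = 0)) (h7 : octF a b = 7) : octF (a+b) b = 7 := by
  rw [octF7 h] at h7; rw [octF7 (by omega)]; omega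

-- A⁻¹ transitions ((a,b) ↦ (a-b, b))
lemma tAi0 (h : octF a b = 0) : octF (a-b) b = 0 := by
  rw [octF0] at h; rw [octF0]; omega
lemma tAi1 (h : octF a b = 1) : octF (a-b) b = 0 := by
  rw [octF1] at h; rw [octF0]; omega
lemma tAi2 (h : octF a b = 2) : octF (a-b) b = 1 := by
  rw [octF2] at h; rw [octF1]; omega
lemma tAi3 (h : octF a b = 3) : octF (a-b) b = 2 ∨ octF (a-b) b = 3 := by
  rw [octF3] at h
  rcases le_or_gt a (b+b) with hc | hc
  · right; rw [octF3]; omega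
  · left; rw [octF2]; omega
lemma tAi4 (h : octF a b = 4) : octF (a-b) b = 4 := by
  rw [octF4] at h; rw [octF4]; omega
lemma tAi5 (h : octF a b = 5) : octF (a-b) b = 4 := by
  rw [octF5] at h; rw [octF4]; omega
lemma tAi6 (h : octF a b = 6) : octF (a-b) b = 5 := by
  rw [octF6] at h; rw [octF5]; omega
lemma tAi7 (h : ¬(a = 0 ∧ b = 0)) (h7 : octF a b = 7) :
    octF (a-b) b = 6 ∨ octF (a-b) b = 7 := by
  rw [octF7 h] at h7
  rcases lt_or_ge (a-b) b with hc | hc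
  · left; rw [octF6]; omega
  · right; rw [octF7 (by omega)]; omega

-- B transitions ((a,b) ↦ (a, b-a))
lemma tB0 (h : octF a b = 0) : octF a (b-a) = 1 := by
  rw [octF0] at h; rw [octF1]; omega
lemma tB1 (h : octF a b = 1) : octF a (b-a) = 1 := by
  rw [octF1] at h; rw [octF1]; omega
lemma tB2 (h : octF a b = 2) : octF a (b-a) = 2 ∨ octF a (b-a) = 3 := by
  rw [octF2] at h
  rcases le_or_gt a (b-a) with hc | hc
  · right; rw [octF3]; omega
  · left; rw [octF2]; omega
lemma tB3 (h : octF a b = 3) : octF a (b-a) = 4 := by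
  rw [octF3] at h; rw [octF4]; omega
lemma tB4 (h : octF a b = 4) : octF a (b-a) = 5 := by
  rw [octF4] at h; rw [octF5]; omega
lemma tB5 (h : octF a b = 5) : octF a (b-a) = 5 := by
  rw [octF5] at h; rw [octF5]; omega
lemma tB6 (h : octF a b = 6) : octF a (b-a) = 6 ∨ octF a (b-a) = 7 := by
  rw [octF6] at h
  rcases le_or_gt (b-a) a with hc | hc
  · right; rw [octF7 (by omega)]; omega
  · left; rw [octF6]; omega
lemma tB7 (h : ¬(a = 0 ∧ b = 0)) (h7 : octF a b = 7) : octF a (b-a) = 0 := by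
  rw [octF7 h] at h7; rw [octF0]; omega

-- B⁻¹ transitions ((a,b) ↦ (a, b+a))
lemma tBi0 (h : octF a b = 0) : octF a (b+a) = 7 := by
  rw [octF0] at h; rw [octF7 (by omega)]; omega
lemma tBi1 (h : octF a b = 1) : octF a (b+a) = 0 ∨ octF a (b+a) = 1 := by
  rw [octF1] at h
  rcases le_or_gt (a + (b+a)) 0 with hc | hc
  · right; rw [octF1]; omega
  · left; rw [octF0]; omega
lemma tBi2 (h : octF a b = 2) : octF a (b+a) = 2 := by
  rw [octF2] at h; rw [octF2]; omega
lemma tBi3 (h : octF a b = 3) : octF a (b+a) = 2 := by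
  rw [octF3] at h; rw [octF2]; omega
lemma tBi4 (h : octF a b = 4) : octF a (b+a) = 3 := by
  rw [octF4] at h; rw [octF3]; omega
lemma tBi5 (h : octF a b = 5) : octF a (b+a) = 4 ∨ octF a (b+a) = 5 := by
  rw [octF5] at h
  rcases lt_or_ge (a + (b+a)) 0 with hc | hc
  · left; rw [octF4]; omega
  · right; rw [octF5]; omega
lemma tBi6 (h : octF a b = 6) : octF a (b+a) = 6 := by
  rw [octF6] at h; rw [octF6]; omega
lemma tBi7 (h : ¬(a = 0 ∧ b = 0)) (h7 : octF a b = 7) : octF a (b+a) = 6 := by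
  rw [octF7 h] at h7; rw [octF6]; omega

end BrGeo


namespace BrGeo

variable {a b c d : ℤ}

lemma adj01 (h1 : a > 0 ∧ b ≤ 0 ∧ a + b > 0) (h2 : c > 0 ∧ d < 0 ∧ c + d ≤ 0) :
    a*d - b*c < 0 := by nlinarith [h1.1, h1.2.1, h2.1, h2.2.1]
lemma adj12 (h1 : a > 0 ∧ b < 0 ∧ a + b ≤ 0) (h2 : c ≤ 0 ∧ d < 0 ∧ d < c) :
    a*d - b*c < 0 := by nlinarith [h1.1, h2.2.1]
lemma adj23 (h1 : a ≤ 0 ∧ b < 0 ∧ b < a) (h2 : c < 0 ∧ d < 0 ∧ c ≤ d) :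
    a*d - b*c < 0 := by nlinarith [h1.2.1, h2.1, h2.2.1]
lemma adj34 (h1 : a < 0 ∧ b < 0 ∧ a ≤ b) (h2 : c < 0 ∧ d ≥ 0 ∧ c + d < 0) :
    a*d - b*c < 0 := by nlinarith [h1.1, h1.2.1, h2.1, h2.2.1]
lemma adj45 (h1 : a < 0 ∧ b ≥ 0 ∧ a + b < 0) (h2 : c < 0 ∧ d > 0 ∧ c + d ≥ 0) :
    a*d - b*c < 0 := by nlinarith [h1.1, h1.2.1, h2.1, h2.2.1]
lemma adj56 (h1 : a < 0 ∧ b > 0 ∧ a + b ≥ 0) (h2 : c ≥ 0 ∧ d > 0 ∧ c < d) :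
    a*d - b*c < 0 := by nlinarith [h1.1, h2.2.1]
lemma adj67 (h1 : a ≥ 0 ∧ b > 0 ∧ a < b) (h2 : c > 0 ∧ d > 0 ∧ d ≤ c) :
    a*d - b*c < 0 := by nlinarith [h1.2.1, h2.1, h2.2.1]
lemma adj70 (h1 : a > 0 ∧ b > 0 ∧ b ≤ a) (h2 : c > 0 ∧ d ≤ 0 ∧ c + d > 0) :
    a*d - b*c < 0 := by nlinarith [h1.1, h1.2.1, h2.1, h2.2.1]

def cross (v w : ℤ × ℤ) : ℤ := v.1 * w.2 - v.2 * w.1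

lemma cross_adj {v w : ℤ × ℤ} (hv : ¬(v.1 = 0 ∧ v.2 = 0)) (hw : ¬(w.1 = 0 ∧ w.2 = 0))
    (h : octF w.1 w.2 = octF v.1 v.2 + 1 ∨ (octF v.1 v.2 = 7 ∧ octF w.1 w.2 = 0)) :
    cross v w < 0 := by
  have hr := @octF_range v.1 v.2
  unfold cross
  rcases h with hA | ⟨h7, h0⟩
  · have h8 : octF v.1 v.2 = 0 ∨ octF v.1 v.2 = 1 ∨ octF v.1 v.2 = 2 ∨ octF v.1 v.2 = 3 ∨
        octF v.1 v.2 = 4 ∨ octF v.1 v.2 = 5 ∨ octF v.1 v.2 = 6 ∨ octF v.1 v.2 = 7 := by omega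
    rcases h8 with h0|h0|h0|h0|h0|h0|h0|h0 <;> rw [h0] at hA <;> norm_num at hA
    · exact adj01 (octF0.mp h0) (octF1.mp hA)
    · exact adj12 (octF1.mp h0) (octF2.mp hA)
    · exact adj23 (octF2.mp h0) (octF3.mp hA)
    · exact adj34 (octF3.mp h0) (octF4.mp hA)
    · exact adj45 (octF4.mp h0) (octF5.mp hA)
    · exact adj56 (octF5.mp h0) (octF6.mp hA)
    · exact adj67 (octF6.mp h0) ((octF7 hw).mp hA)
    · exact absurd hA (by have := @octF_range w.1 w.2; omega)
  · exact adj70 ((octF7 hv).mp h7) (octF0.mp h0)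

lemma cross_trans {u v w : ℤ × ℤ} (hu : ¬(u.1 = 0 ∧ u.2 = 0)) (hvz : ¬(v.1 = 0 ∧ v.2 = 0))
    (hwz : ¬(w.1 = 0 ∧ w.2 = 0))
    (huv : octF u.1 u.2 = octF v.1 v.2) (hvw : octF v.1 v.2 = octF w.1 w.2)
    (h1 : cross u v < 0) (h2 : cross v w < 0) : cross u w < 0 := by
  have hr := @octF_range v.1 v.2
  have key1 : v.1 * cross u w = w.1 * cross u v + u.1 * cross v w := by
    unfold cross; ring
  have key2 : v.2 * cross u w = w.2 * cross u v + u.2 * cross v w := by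
    unfold cross; ring
  have hu0 : octF u.1 u.2 = octF v.1 v.2 := huv
  have hw0 : octF w.1 w.2 = octF v.1 v.2 := hvw.symm
  by_contra hc
  push_neg at hc
  have h8 : octF v.1 v.2 = 0 ∨ octF v.1 v.2 = 1 ∨ octF v.1 v.2 = 2 ∨ octF v.1 v.2 = 3 ∨
      octF v.1 v.2 = 4 ∨ octF v.1 v.2 = 5 ∨ octF v.1 v.2 = 6 ∨ octF v.1 v.2 = 7 := by omega
  rcases h8 with h0|h0|h0|h0|h0|h0|h0|h0 <;> rw [h0] at hu0 hw0
  · have cu := octF0.mp hu0; have cv := octF0.mp h0; have cw := octF0.mp hw0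
    have k1 := mul_neg_of_pos_of_neg cw.1 h1
    have k2 := mul_neg_of_pos_of_neg cu.1 h2
    have k3 := mul_nonneg cv.1.le hc
    linarith
  · have cu := octF1.mp hu0; have cv := octF1.mp h0; have cw := octF1.mp hw0
    have k1 := mul_neg_of_pos_of_neg cw.1 h1
    have k2 := mul_neg_of_pos_of_neg cu.1 h2
    have k3 := mul_nonneg cv.1.le hc
    linarith
  · have cu := octF2.mp hu0; have cv := octF2.mp h0; have cw := octF2.mp hw0
    have k1 := mul_pos_of_neg_of_neg cw.2.1 h1
    have k2 := mul_pos_of_neg_of_neg cu.2.1 h2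
    have k3 := mul_nonpos_of_nonpos_of_nonneg cv.2.1.le hc
    linarith
  · have cu := octF3.mp hu0; have cv := octF3.mp h0; have cw := octF3.mp hw0
    have k1 := mul_pos_of_neg_of_neg cw.1 h1
    have k2 := mul_pos_of_neg_of_neg cu.1 h2
    have k3 := mul_nonpos_of_nonpos_of_nonneg cv.1.le hc
    linarith
  · have cu := octF4.mp hu0; have cv := octF4.mp h0; have cw := octF4.mp hw0
    have k1 := mul_pos_of_neg_of_neg cw.1 h1
    have k2 := mul_pos_of_neg_of_neg cu.1 h2
    have k3 := mul_nonpos_of_nonpos_of_nonneg cv.1.le hc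
    linarith
  · have cu := octF5.mp hu0; have cv := octF5.mp h0; have cw := octF5.mp hw0
    have k1 := mul_neg_of_pos_of_neg cw.2.1 h1
    have k2 := mul_neg_of_pos_of_neg cu.2.1 h2
    have k3 := mul_nonneg cv.2.1.le hc
    linarith
  · have cu := octF6.mp hu0; have cv := octF6.mp h0; have cw := octF6.mp hw0
    have k1 := mul_neg_of_pos_of_neg cw.2.1 h1
    have k2 := mul_neg_of_pos_of_neg cu.2.1 h2
    have k3 := mul_nonneg cv.2.1.le hc
    linarith
  · have cu := (octF7 hu).mp hu0; have cv := (octF7 hvz).mp h0; have cw := (octF7 hwz).mp hw0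
    have k1 := mul_neg_of_pos_of_neg cw.1 h1
    have k2 := mul_neg_of_pos_of_neg cu.1 h2
    have k3 := mul_nonneg cv.1.le hc
    linarith

lemma cross_AA (v w : ℤ × ℤ) : cross (v.1 + v.2, v.2) (w.1 + w.2, w.2) = cross v w := by
  unfold cross; ring
lemma cross_AiAi (v w : ℤ × ℤ) : cross (v.1 - v.2, v.2) (w.1 - w.2, w.2) = cross v w := by
  unfold cross; ring
lemma cross_BB (v w : ℤ × ℤ) : cross (v.1, v.2 - v.1) (w.1, w.2 - w.1) = cross v w := by
  unfold cross; ring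
lemma cross_BiBi (v w : ℤ × ℤ) : cross (v.1, v.2 + v.1) (w.1, w.2 + w.1) = cross v w := by
  unfold cross; ring
lemma cross_negneg (v w : ℤ × ℤ) : cross (-v.1, -v.2) (-w.1, -w.2) = cross v w := by
  unfold cross; ring
lemma cross_vA (v : ℤ × ℤ) : cross v (v.1 + v.2, v.2) = -(v.2 * v.2) := by unfold cross; ring
lemma cross_vB (v : ℤ × ℤ) : cross v (v.1, v.2 - v.1) = -(v.1 * v.1) := by unfold cross; ring
lemma cross_antisymm (v w : ℤ × ℤ) : cross w v = - cross v w := by unfold cross; ring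

end BrGeo


namespace BrGeo

variable {a b : ℤ}

lemma wrapB (h : ¬(a = 0 ∧ b = 0)) : octF a (b-a) = 0 ↔ octF a b = 7 := by
  constructor
  · intro h0
    by_contra hne
    have hr := @octF_range a b
    have h8 : octF a b = 0 ∨ octF a b = 1 ∨ octF a b = 2 ∨ octF a b = 3 ∨
        octF a b = 4 ∨ octF a b = 5 ∨ octF a b = 6 := by omega
    rcases h8 with h'|h'|h'|h'|h'|h'|h'
    · have := tB0 h'; omega
    · have := tB1 h'; omega
    · have := tB2 h'; omega
    · have := tB3 h'; omega
    · have := tB4 h'; omega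
    · have := tB5 h'; omega
    · have := tB6 h'; omega
  · exact tB7 h

lemma wrapBi (h : ¬(a = 0 ∧ b = 0)) : octF a (b+a) = 7 ↔ octF a b = 0 := by
  constructor
  · intro h0
    by_contra hne
    have hr := @octF_range a b
    have h8 : octF a b = 1 ∨ octF a b = 2 ∨ octF a b = 3 ∨
        octF a b = 4 ∨ octF a b = 5 ∨ octF a b = 6 ∨ octF a b = 7 := by omega
    rcases h8 with h'|h'|h'|h'|h'|h'|h'
    · have := tBi1 h'; omega
    · have := tBi2 h'; omega
    · have := tBi3 h'; omega
    · have := tBi4 h'; omega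
    · have := tBi5 h'; omega
    · have := tBi6 h'; omega
    · have := tBi7 h h'; omega
  · exact tBi0

lemma oct_neg (h : ¬(a = 0 ∧ b = 0)) :
    octF (-a) (-b) = if octF a b ≤ 3 then octF a b + 4 else octF a b - 4 := by
  have hr := @octF_range a b
  have h8 : octF a b = 0 ∨ octF a b = 1 ∨ octF a b = 2 ∨ octF a b = 3 ∨
      octF a b = 4 ∨ octF a b = 5 ∨ octF a b = 6 ∨ octF a b = 7 := by omega
  rcases h8 with h'|h'|h'|h'|h'|h'|h'|h'
  · have hc := octF0.mp h'
    have himg : octF (-a) (-b) = 4 := by rw [octF4]; omega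
    split_ifs <;> omega
  · have hc := octF1.mp h'
    have himg : octF (-a) (-b) = 5 := by rw [octF5]; omega
    split_ifs <;> omega
  · have hc := octF2.mp h'
    have himg : octF (-a) (-b) = 6 := by rw [octF6]; omega
    split_ifs <;> omega
  · have hc := octF3.mp h'
    have himg : octF (-a) (-b) = 7 := by rw [octF7 (by omega)]; omega
    split_ifs <;> omega
  · have hc := octF4.mp h'
    have himg : octF (-a) (-b) = 0 := by rw [octF0]; omega
    split_ifs <;> omega
  · have hc := octF5.mp h'
    have himg : octF (-a) (-b) = 1 := by rw [octF1]; omega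
    split_ifs <;> omega
  · have hc := octF6.mp h'
    have himg : octF (-a) (-b) = 2 := by rw [octF2]; omega
    split_ifs <;> omega
  · have hc := (octF7 h).mp h'
    have himg : octF (-a) (-b) = 3 := by rw [octF3]; omega
    split_ifs <;> omega

/-- The ℤ-covering of the rational circle: nonzero integer vectors with a winding level. -/
abbrev L : Type := {v : ℤ × ℤ // ¬(v.1 = 0 ∧ v.2 = 0)} × ℤ

def lam (x : L) : ℤ := 8 * x.2 + octF x.1.1.1 x.1.1.2

def llt (x y : L) : Prop := lam x < lam y ∨ (lam x = lam y ∧ cross x.1.1 y.1.1 < 0)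

def lle (x y : L) : Prop := llt x y ∨ x = y

lemma oct_eq_of_lam_eq {x y : L} (h : lam x = lam y) :
    octF x.1.1.1 x.1.1.2 = octF y.1.1.1 y.1.1.2 ∧ x.2 = y.2 := by
  have h1 := @octF_range x.1.1.1 x.1.1.2
  have h2 := @octF_range y.1.1.1 y.1.1.2
  unfold lam at h; omega

lemma llt_trans {x y z : L} (h1 : llt x y) (h2 : llt y z) : llt x z := by
  rcases h1 with h1 | ⟨h1, c1⟩
  · rcases h2 with h2 | ⟨h2, c2⟩
    · exact Or.inl (by omega)
    · exact Or.inl (by omega)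
  · rcases h2 with h2 | ⟨h2, c2⟩
    · exact Or.inl (by omega)
    · refine Or.inr ⟨by omega, ?_⟩
      exact cross_trans x.1.2 y.1.2 z.1.2 (oct_eq_of_lam_eq h1).1 (oct_eq_of_lam_eq h2).1 c1 c2

lemma lle_trans {x y z : L} (h1 : lle x y) (h2 : lle y z) : lle x z := by
  rcases h1 with h1 | rfl
  · rcases h2 with h2 | rfl
    · exact Or.inl (llt_trans h1 h2)
    · exact Or.inl h1
  · exact h2

lemma llt_lle_trans {x y z : L} (h1 : llt x y) (h2 : lle y z) : llt x z := by
  rcases h2 with h2 | rfl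
  · exact llt_trans h1 h2
  · exact h1

lemma lle_llt_trans {x y z : L} (h1 : lle x y) (h2 : llt y z) : llt x z := by
  rcases h1 with h1 | rfl
  · exact llt_trans h1 h2
  · exact h2

lemma lam_le_of_lle {x y : L} (h : lle x y) : lam x ≤ lam y := by
  rcases h with (h | ⟨h, _⟩) | rfl <;> omega

lemma llt_of_lam_lt {x y : L} (h : lam x < lam y) : llt x y := Or.inl h

lemma ne_AV {v : ℤ × ℤ} (h : ¬(v.1 = 0 ∧ v.2 = 0)) : ¬(v.1 + v.2 = 0 ∧ v.2 = 0) := by omega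
lemma ne_AVi {v : ℤ × ℤ} (h : ¬(v.1 = 0 ∧ v.2 = 0)) : ¬(v.1 - v.2 = 0 ∧ v.2 = 0) := by omega
lemma ne_BV {v : ℤ × ℤ} (h : ¬(v.1 = 0 ∧ v.2 = 0)) : ¬(v.1 = 0 ∧ v.2 - v.1 = 0) := by omega
lemma ne_BVi {v : ℤ × ℤ} (h : ¬(v.1 = 0 ∧ v.2 = 0)) : ¬(v.1 = 0 ∧ v.2 + v.1 = 0) := by omega
lemma ne_neg {v : ℤ × ℤ} (h : ¬(v.1 = 0 ∧ v.2 = 0)) : ¬(-v.1 = 0 ∧ -v.2 = 0) := by omega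

def PAf : L → L := fun x => (⟨(x.1.1.1 + x.1.1.2, x.1.1.2), ne_AV x.1.2⟩, x.2)
def PAg : L → L := fun x => (⟨(x.1.1.1 - x.1.1.2, x.1.1.2), ne_AVi x.1.2⟩, x.2)
def PBf : L → L := fun x => (⟨(x.1.1.1, x.1.1.2 - x.1.1.1), ne_BV x.1.2⟩,
    x.2 + if octF x.1.1.1 x.1.1.2 = 7 then 1 else 0)
def PBg : L → L := fun x => (⟨(x.1.1.1, x.1.1.2 + x.1.1.1), ne_BVi x.1.2⟩,
    x.2 - if octF x.1.1.1 x.1.1.2 = 0 then 1 else 0)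

/-- the lifted action of `σ₁` (matrix `[[1,1],[0,1]]`). -/
def PA : Equiv.Perm L where
  toFun := PAf
  invFun := PAg
  left_inv := by
    rintro ⟨⟨⟨a, b⟩, h⟩, k⟩
    unfold PAf PAg
    refine Prod.ext (Subtype.ext ?_) rfl
    show (a + b - b, b) = (a, b)
    rw [add_sub_cancel_right]
  right_inv := by
    rintro ⟨⟨⟨a, b⟩, h⟩, k⟩
    unfold PAf PAg
    refine Prod.ext (Subtype.ext ?_) rfl
    show (a - b + b, b) = (a, b)
    rw [sub_add_cancel]

/-- the lifted action of `σ₂` (matrix `[[1,0],[-1,1]]`), with winding bookkeeping. -/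
def PB : Equiv.Perm L where
  toFun := PBf
  invFun := PBg
  left_inv := by
    rintro ⟨⟨⟨a, b⟩, h⟩, k⟩
    unfold PBf PBg
    have hw := wrapB (a := a) (b := b) h
    refine Prod.ext (Subtype.ext ?_) ?_
    · show (a, b - a + a) = (a, b)
      rw [sub_add_cancel]
    · show k + (if octF a b = 7 then (1:ℤ) else 0) - (if octF a (b - a) = 0 then 1 else 0) = k
      by_cases h7 : octF a b = 7
      · rw [if_pos h7, if_pos (hw.mpr h7)]; ring
      · rw [if_neg h7, if_neg (fun hc => h7 (hw.mp hc))]; ring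
  right_inv := by
    rintro ⟨⟨⟨a, b⟩, h⟩, k⟩
    unfold PBf PBg
    have hw := wrapBi (a := a) (b := b) h
    refine Prod.ext (Subtype.ext ?_) ?_
    · show (a, b + a - a) = (a, b)
      rw [add_sub_cancel_right]
    · show k - (if octF a b = 0 then (1:ℤ) else 0) + (if octF a (b + a) = 7 then 1 else 0) = k
      by_cases h0 : octF a b = 0
      · rw [if_pos h0, if_pos (hw.mpr h0)]; ring
      · rw [if_neg h0, if_neg (fun hc => h0 (hw.mp hc))]; ring

lemma PA_apply (x : L) : PA x = PAf x := rfl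
lemma PAsymm_apply (x : L) : PA.symm x = PAg x := rfl
lemma PB_apply (x : L) : PB x = PBf x := rfl
lemma PBsymm_apply (x : L) : PB.symm x = PBg x := rfl

end BrGeo


namespace BrGeo

lemma oct8 (a b : ℤ) : octF a b = 0 ∨ octF a b = 1 ∨ octF a b = 2 ∨ octF a b = 3 ∨
    octF a b = 4 ∨ octF a b = 5 ∨ octF a b = 6 ∨ octF a b = 7 := by
  have := @octF_range a b; omega

lemma stepA (x : L) : lam x ≤ lam (PAf x) ∧ lam (PAf x) ≤ lam x + 1 := by
  obtain ⟨⟨⟨a, b⟩, h⟩, k⟩ := x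
  have hab : ¬(a = 0 ∧ b = 0) := h
  show 8*k + octF a b ≤ 8*k + octF (a+b) b ∧ 8*k + octF (a+b) b ≤ 8*k + octF a b + 1
  rcases oct8 a b with h'|h'|h'|h'|h'|h'|h'|h'
  · have := tA0 h'; omega
  · have := tA1 h'; omega
  · have := tA2 h'; omega
  · have := tA3 h'; omega
  · have := tA4 h'; omega
  · have := tA5 h'; omega
  · have := tA6 h'; omega
  · have := tA7 hab h'; omega

lemma stepAi (x : L) : lam x - 1 ≤ lam (PAg x) ∧ lam (PAg x) ≤ lam x := by
  obtain ⟨⟨⟨a, b⟩, h⟩, k⟩ := x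
  have hab : ¬(a = 0 ∧ b = 0) := h
  show 8*k + octF a b - 1 ≤ 8*k + octF (a-b) b ∧ 8*k + octF (a-b) b ≤ 8*k + octF a b
  rcases oct8 a b with h'|h'|h'|h'|h'|h'|h'|h'
  · have := tAi0 h'; omega
  · have := tAi1 h'; omega
  · have := tAi2 h'; omega
  · have := tAi3 h'; omega
  · have := tAi4 h'; omega
  · have := tAi5 h'; omega
  · have := tAi6 h'; omega
  · have := tAi7 hab h'; omega

lemma stepB (x : L) : lam x ≤ lam (PBf x) ∧ lam (PBf x) ≤ lam x + 1 := by
  obtain ⟨⟨⟨a, b⟩, h⟩, k⟩ := x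
  have hab : ¬(a = 0 ∧ b = 0) := h
  show 8*k + octF a b ≤ 8*(k + if octF a b = 7 then 1 else 0) + octF a (b-a) ∧
    8*(k + if octF a b = 7 then 1 else 0) + octF a (b-a) ≤ 8*k + octF a b + 1
  rcases oct8 a b with h'|h'|h'|h'|h'|h'|h'|h'
  · have := tB0 h'; rw [if_neg (by omega)]; omega
  · have := tB1 h'; rw [if_neg (by omega)]; omega
  · have := tB2 h'; rw [if_neg (by omega)]; omega
  · have := tB3 h'; rw [if_neg (by omega)]; omega
  · have := tB4 h'; rw [if_neg (by omega)]; omega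
  · have := tB5 h'; rw [if_neg (by omega)]; omega
  · have := tB6 h'; rw [if_neg (by omega)]; omega
  · have := tB7 hab h'; rw [if_pos h']; omega

lemma stepBi (x : L) : lam x - 1 ≤ lam (PBg x) ∧ lam (PBg x) ≤ lam x := by
  obtain ⟨⟨⟨a, b⟩, h⟩, k⟩ := x
  have hab : ¬(a = 0 ∧ b = 0) := h
  show 8*k + octF a b - 1 ≤ 8*(k - if octF a b = 0 then 1 else 0) + octF a (b+a) ∧
    8*(k - if octF a b = 0 then 1 else 0) + octF a (b+a) ≤ 8*k + octF a b
  rcases oct8 a b with h'|h'|h'|h'|h'|h'|h'|h'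
  · have := tBi0 h'; rw [if_pos h']; omega
  · have := tBi1 h'; rw [if_neg (by omega)]; omega
  · have := tBi2 h'; rw [if_neg (by omega)]; omega
  · have := tBi3 h'; rw [if_neg (by omega)]; omega
  · have := tBi4 h'; rw [if_neg (by omega)]; omega
  · have := tBi5 h'; rw [if_neg (by omega)]; omega
  · have := tBi6 h'; rw [if_neg (by omega)]; omega
  · have := tBi7 hab h'; rw [if_neg (by omega)]; omega

lemma lam_succ_adj {x y : L} (h : lam y = lam x + 1) : cross x.1.1 y.1.1 < 0 := by
  have h1 := @octF_range x.1.1.1 x.1.1.2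
  have h2 := @octF_range y.1.1.1 y.1.1.2
  apply cross_adj x.1.2 y.1.2
  unfold lam at h
  omega

lemma cross_PAf (x y : L) : cross (PAf x).1.1 (PAf y).1.1 = cross x.1.1 y.1.1 := cross_AA _ _
lemma cross_PAg (x y : L) : cross (PAg x).1.1 (PAg y).1.1 = cross x.1.1 y.1.1 := cross_AiAi _ _
lemma cross_PBf (x y : L) : cross (PBf x).1.1 (PBf y).1.1 = cross x.1.1 y.1.1 := cross_BB _ _
lemma cross_PBg (x y : L) : cross (PBg x).1.1 (PBg y).1.1 = cross x.1.1 y.1.1 := cross_BiBi _ _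

lemma PAf_lt {x y : L} (h : llt x y) : llt (PAf x) (PAf y) := by
  have sx := stepA x; have sy := stepA y
  rcases h with hlt | ⟨heq, hcr⟩
  · rcases lt_or_ge (lam (PAf x)) (lam (PAf y)) with h' | h'
    · exact Or.inl h'
    · refine Or.inr ⟨by omega, ?_⟩
      rw [cross_PAf]
      exact lam_succ_adj (by omega)
  · rcases lt_trichotomy (lam (PAf x)) (lam (PAf y)) with h' | h' | h'
    · exact Or.inl h'
    · exact Or.inr ⟨h', by rw [cross_PAf]; exact hcr⟩
    · exfalso
      have h2 := lam_succ_adj (x := PAf y) (y := PAf x) (by omega)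
      rw [cross_antisymm] at h2
      rw [cross_PAf] at h2
      omega
  
lemma PAg_lt {x y : L} (h : llt x y) : llt (PAg x) (PAg y) := by
  have sx := stepAi x; have sy := stepAi y
  rcases h with hlt | ⟨heq, hcr⟩
  · rcases lt_or_ge (lam (PAg x)) (lam (PAg y)) with h' | h'
    · exact Or.inl h'
    · refine Or.inr ⟨by omega, ?_⟩
      rw [cross_PAg]
      exact lam_succ_adj (by omega)
  · rcases lt_trichotomy (lam (PAg x)) (lam (PAg y)) with h' | h' | h'
    · exact Or.inl h'
    · exact Or.inr ⟨h', by rw [cross_PAg]; exact hcr⟩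
    · exfalso
      have h2 := lam_succ_adj (x := PAg y) (y := PAg x) (by omega)
      rw [cross_antisymm] at h2
      rw [cross_PAg] at h2
      omega

lemma PBf_lt {x y : L} (h : llt x y) : llt (PBf x) (PBf y) := by
  have sx := stepB x; have sy := stepB y
  rcases h with hlt | ⟨heq, hcr⟩
  · rcases lt_or_ge (lam (PBf x)) (lam (PBf y)) with h' | h'
    · exact Or.inl h'
    · refine Or.inr ⟨by omega, ?_⟩
      rw [cross_PBf]
      exact lam_succ_adj (by omega)
  · rcases lt_trichotomy (lam (PBf x)) (lam (PBf y)) with h' | h' | h'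
    · exact Or.inl h'
    · exact Or.inr ⟨h', by rw [cross_PBf]; exact hcr⟩
    · exfalso
      have h2 := lam_succ_adj (x := PBf y) (y := PBf x) (by omega)
      rw [cross_antisymm] at h2
      rw [cross_PBf] at h2
      omega

lemma PBg_lt {x y : L} (h : llt x y) : llt (PBg x) (PBg y) := by
  have sx := stepBi x; have sy := stepBi y
  rcases h with hlt | ⟨heq, hcr⟩
  · rcases lt_or_ge (lam (PBg x)) (lam (PBg y)) with h' | h'
    · exact Or.inl h'
    · refine Or.inr ⟨by omega, ?_⟩
      rw [cross_PBg]
      exact lam_succ_adj (by omega)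
  · rcases lt_trichotomy (lam (PBg x)) (lam (PBg y)) with h' | h' | h'
    · exact Or.inl h'
    · exact Or.inr ⟨h', by rw [cross_PBg]; exact hcr⟩
    · exfalso
      have h2 := lam_succ_adj (x := PBg y) (y := PBg x) (by omega)
      rw [cross_antisymm] at h2
      rw [cross_PBg] at h2
      omega

lemma lle_PAf (x : L) : lle x (PAf x) := by
  obtain ⟨⟨⟨a, b⟩, h⟩, k⟩ := x
  by_cases hb : b = 0
  · right
    refine Prod.ext (Subtype.ext ?_) rfl
    show (a, b) = (a + b, b)
    rw [hb]; norm_num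
  · left
    have s := stepA (⟨⟨(a,b),h⟩,k⟩ : L)
    rcases lt_or_ge (lam (⟨⟨(a,b),h⟩,k⟩ : L)) (lam (PAf ⟨⟨(a,b),h⟩,k⟩)) with h' | h'
    · exact Or.inl h'
    · refine Or.inr ⟨by omega, ?_⟩
      show cross (a, b) (a + b, b) < 0
      have : cross (a, b) (a + b, b) = -(b*b) := by unfold cross; ring
      rw [this]
      have := mul_self_pos.mpr hb
      linarith
  
lemma lle_PBf (x : L) : lle x (PBf x) := by
  obtain ⟨⟨⟨a, b⟩, h⟩, k⟩ := x
  by_cases ha : a = 0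
  · right
    have hab : ¬(a = 0 ∧ b = 0) := h
    have h7 : octF a b ≠ 7 := by
      intro h7
      have := (octF7 hab).mp h7; omega
    refine Prod.ext (Subtype.ext ?_) ?_
    · show (a, b) = (a, b - a)
      rw [ha]; norm_num
    · show k = k + (if octF a b = 7 then 1 else 0)
      rw [if_neg h7]; ring
  · left
    have s := stepB (⟨⟨(a,b),h⟩,k⟩ : L)
    rcases lt_or_ge (lam (⟨⟨(a,b),h⟩,k⟩ : L)) (lam (PBf ⟨⟨(a,b),h⟩,k⟩)) with h' | h'
    · exact Or.inl h'
    · refine Or.inr ⟨by omega, ?_⟩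
      show cross (a, b) (a, b - a) < 0
      have : cross (a, b) (a, b - a) = -(a*a) := by unfold cross; ring
      rw [this]
      have := mul_self_pos.mpr ha
      linarith

/-- the lifted half-turn. -/
def JF : L → L := fun x =>
  (⟨(-x.1.1.1, -x.1.1.2), ne_neg x.1.2⟩, x.2 + if 4 ≤ octF x.1.1.1 x.1.1.2 then 1 else 0)

lemma lam_JF (x : L) : lam (JF x) = lam x + 4 := by
  obtain ⟨⟨⟨a, b⟩, h⟩, k⟩ := x
  have hab : ¬(a = 0 ∧ b = 0) := h
  have hab : ¬(a = 0 ∧ b = 0) := h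
  show 8*(k + if 4 ≤ octF a b then 1 else 0) + octF (-a) (-b) = 8*k + octF a b + 4
  rw [oct_neg hab]
  have := @octF_range a b
  split_ifs <;> omega

lemma llt_PAf_JF (x : L) : llt (PAf x) (JF x) := by
  have s := stepA x
  have j := lam_JF x
  exact Or.inl (by omega)

lemma llt_PBf_JF (x : L) : llt (PBf x) (JF x) := by
  have s := stepB x
  have j := lam_JF x
  exact Or.inl (by omega)

end BrGeo


namespace BrGeo

-- nonzero helpers for stage vectors
lemma nz1 {a b : ℤ} (h : ¬(a = 0 ∧ b = 0)) : ¬(a + b = 0 ∧ b = 0) := by omega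
lemma nz2 {a b : ℤ} (h : ¬(a = 0 ∧ b = 0)) : ¬(a + b = 0 ∧ -a = 0) := by omega
lemma nz3 {a b : ℤ} (h : ¬(a = 0 ∧ b = 0)) : ¬(b = 0 ∧ -a = 0) := by omega
lemma nz4 {a b : ℤ} (h : ¬(a = 0 ∧ b = 0)) : ¬(b - a = 0 ∧ -a = 0) := by omega
lemma nz5 {a b : ℤ} (h : ¬(a = 0 ∧ b = 0)) : ¬(a = 0 ∧ b - a = 0) := by omega
lemma nz6 {a b : ℤ} (h : ¬(a = 0 ∧ b = 0)) : ¬(b = 0 ∧ b - a = 0) := by omega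

/-- the braid relation for the lifted maps. -/
lemma braid_perm : PA * PB * PA = PB * PA * PB := by
  apply Equiv.ext
  rintro ⟨⟨⟨a, b⟩, h⟩, k⟩
  have hab : ¬(a = 0 ∧ b = 0) := h
  show PA (PB (PA (⟨⟨(a,b),h⟩,k⟩ : L))) = PB (PA (PB (⟨⟨(a,b),h⟩,k⟩ : L)))
  simp only [PA_apply, PB_apply]
  -- LHS: PAf (PBf (PAf x)); vector chain: (a,b) → (a+b,b) → (a+b,-a) → (b,-a)
  -- RHS: PBf (PAf (PBf x)); vector chain: (a,b) → (a,b-a) → (b,b-a) → (b,-a)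
  unfold PAf PBf
  simp only []
  refine Prod.ext (Subtype.ext ?_) ?_
  · show (a + b + (b - (a + b)), b - (a + b)) = (a + (b - a), b - a - (a + (b - a)))
    simp only [Prod.mk.injEq]
    constructor <;> ring
  · show k + (if octF (a + b) b = 7 then (1:ℤ) else 0) =
      (k + if octF a b = 7 then (1:ℤ) else 0) +
        if octF (a + (b - a)) (b - a) = 7 then 1 else 0
    have e1 : a + (b - a) = b := by ring
    rw [e1]
    -- case analysis on octant of (a,b)
    rcases oct8 a b with h'|h'|h'|h'|h'|h'|h'|h'
    · have o1 := tA0 h'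
      have o2 := tB0 h'
      have o3 : octF b (b - a) = 2 := by
        have := tA1 (a := a) (b := b - a) o2
        rwa [show a + (b - a) = b by ring] at this
      rw [if_neg (by omega), if_neg (by omega), if_neg (by omega)]; ring
    · have o1 := tA1 h'
      have o2 := tB1 h'
      have o3 : octF b (b - a) = 2 := by
        have := tA1 (a := a) (b := b - a) o2
        rwa [show a + (b - a) = b by ring] at this
      rw [if_neg (by omega), if_neg (by omega), if_neg (by omega)]; ring
    · have o1 := tA2 h'
      have o2 := tB2 h'
      have o3 : octF b (b - a) = 3 := by
        rcases o2 with o2 | o2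
        · have := tA2 (a := a) (b := b - a) o2
          rwa [show a + (b - a) = b by ring] at this
        · have := tA3 (a := a) (b := b - a) o2
          rwa [show a + (b - a) = b by ring] at this
      rw [if_neg (by omega), if_neg (by omega), if_neg (by omega)]; ring
    · have o1 := tA3 h'
      have o2 := tB3 h'
      have o3 : octF b (b - a) = 4 ∨ octF b (b - a) = 5 := by
        have := tA4 (a := a) (b := b - a) o2
        rwa [show a + (b - a) = b by ring] at this
      rw [if_neg (by omega), if_neg (by omega), if_neg (by omega)]; ring
    · have o1 := tA4 h'
      have o2 := tB4 h'
      have o3 : octF b (b - a) = 6 := by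
        have := tA5 (a := a) (b := b - a) o2
        rwa [show a + (b - a) = b by ring] at this
      rw [if_neg (by omega), if_neg (by omega), if_neg (by omega)]; ring
    · have o1 := tA5 h'
      have o2 := tB5 h'
      have o3 : octF b (b - a) = 6 := by
        have := tA5 (a := a) (b := b - a) o2
        rwa [show a + (b - a) = b by ring] at this
      rw [if_neg (by omega), if_neg (by omega), if_neg (by omega)]; ring
    · have o1 := tA6 h'
      have o2 := tB6 h'
      have o3 : octF b (b - a) = 7 := by
        rcases o2 with o2 | o2
        · have := tA6 (a := a) (b := b - a) o2
          rwa [show a + (b - a) = b by ring] at this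
        · have := tA7 (a := a) (b := b - a) (nz5 hab) o2
          rwa [show a + (b - a) = b by ring] at this
      rw [if_pos o1, if_neg (by omega), if_pos o3]; ring
    · have o1 := tA7 hab h'
      have o2 := tB7 hab h'
      have o3 : octF b (b - a) = 0 ∨ octF b (b - a) = 1 := by
        have := tA0 (a := a) (b := b - a) o2
        rwa [show a + (b - a) = b by ring] at this
      rw [if_pos o1, if_pos h', if_neg (by omega)]
      ring

def braidGens : Fin 2 → Equiv.Perm L := ![PA, PB]

lemma braid_rels_hold : ∀ r ∈ braidRel3, FreeGroup.lift braidGens r = 1 := by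
  intro r hr
  rcases hr with rfl
  simp only [map_mul, map_inv, FreeGroup.lift_apply_of]
  have g0 : braidGens 0 = PA := rfl
  have g1 : braidGens 1 = PB := rfl
  rw [g0, g1, mul_inv_eq_one]
  exact braid_perm

/-- the lifted circle action of the braid group. -/
def act : BraidGroup3 →* Equiv.Perm L := PresentedGroup.toGroup braid_rels_hold

lemma act_sigma0 : act (sigma 0) = PA := PresentedGroup.toGroup.of braid_rels_hold
lemma act_sigma1 : act (sigma 1) = PB := PresentedGroup.toGroup.of braid_rels_hold

end BrGeo


namespace BrGeo

def JG : L → L := fun x =>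
  (⟨(-x.1.1.1, -x.1.1.2), ne_neg x.1.2⟩, x.2 - if octF x.1.1.1 x.1.1.2 ≤ 3 then 1 else 0)

lemma octneg_le3 {a b : ℤ} (h : ¬(a = 0 ∧ b = 0)) :
    (octF (-a) (-b) ≤ 3 ↔ 4 ≤ octF a b) := by
  rw [oct_neg h]
  have := @octF_range a b
  split_ifs <;> omega

lemma octneg_ge4 {a b : ℤ} (h : ¬(a = 0 ∧ b = 0)) :
    (4 ≤ octF (-a) (-b) ↔ octF a b ≤ 3) := by
  rw [oct_neg h]
  have := @octF_range a b
  split_ifs <;> omega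

/-- the lifted half-turn as a permutation. -/
def Jp : Equiv.Perm L where
  toFun := JF
  invFun := JG
  left_inv := by
    rintro ⟨⟨⟨a, b⟩, h⟩, k⟩
    have hab : ¬(a = 0 ∧ b = 0) := h
    unfold JF JG
    refine Prod.ext (Subtype.ext ?_) ?_
    · show (- -a, - -b) = (a, b)
      simp
    · show k + (if 4 ≤ octF a b then (1:ℤ) else 0)
          - (if octF (-a) (-b) ≤ 3 then 1 else 0) = k
      by_cases hc : 4 ≤ octF a b
      · rw [if_pos hc, if_pos ((octneg_le3 hab).mpr hc)]; ring
      · rw [if_neg hc, if_neg (fun hx => hc ((octneg_le3 hab).mp hx))]; ring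
  right_inv := by
    rintro ⟨⟨⟨a, b⟩, h⟩, k⟩
    have hab : ¬(a = 0 ∧ b = 0) := h
    unfold JF JG
    refine Prod.ext (Subtype.ext ?_) ?_
    · show (- -a, - -b) = (a, b)
      simp
    · show k - (if octF a b ≤ 3 then (1:ℤ) else 0)
          + (if 4 ≤ octF (-a) (-b) then 1 else 0) = k
      by_cases hc : octF a b ≤ 3
      · rw [if_pos hc, if_pos ((octneg_ge4 hab).mpr hc)]; ring
      · rw [if_neg hc, if_neg (fun hx => hc ((octneg_ge4 hab).mp hx))]; ring

lemma Jp_apply (x : L) : Jp x = JF x := rfl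

lemma lam_Jp (x : L) : lam (Jp x) = lam x + 4 := lam_JF x

lemma lam_Jp_symm (x : L) : lam (Jp.symm x) = lam x - 4 := by
  have := lam_Jp (Jp.symm x)
  rw [Equiv.apply_symm_apply] at this
  omega

lemma lam_Jp_zpow (z : ℤ) (x : L) : lam ((Jp ^ z) x) = lam x + 4 * z := by
  induction z using Int.induction_on with
  | zero => simp
  | succ n ih =>
      have : (Jp ^ ((n : ℤ) + 1)) x = Jp ((Jp ^ (n : ℤ)) x) := by
        rw [show (n : ℤ) + 1 = 1 + (n : ℤ) by ring, zpow_add, zpow_one]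
        rfl
      rw [this, lam_Jp, ih]; ring
  | pred n ih =>
      have : (Jp ^ (-(n : ℤ) - 1)) x = Jp.symm ((Jp ^ (-(n : ℤ))) x) := by
        rw [show -(n : ℤ) - 1 = (-1) + (-(n : ℤ)) by ring, zpow_add, zpow_neg_one]
        rfl
      rw [this, lam_Jp_symm, ih]; ring

lemma act_delta : act braidDelta = PA * PB * PA := by
  unfold braidDelta
  rw [map_mul, map_mul, act_sigma0, act_sigma1]

/-- the square of the Garside element acts as the lifted half-turn. -/
lemma act_delta_sq : act (braidDelta ^ 2) = Jp := by
  rw [map_pow, act_delta]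
  apply Equiv.ext
  rintro ⟨⟨⟨a, b⟩, h⟩, k⟩
  have hab : ¬(a = 0 ∧ b = 0) := h
  show PA (PB (PA (PA (PB (PA (⟨⟨(a,b),h⟩,k⟩ : L)))))) = JF (⟨⟨(a,b),h⟩,k⟩ : L)
  simp only [PA_apply, PB_apply]
  unfold PAf PBf JF
  simp only []
  refine Prod.ext (Subtype.ext ?_) ?_
  · simp only [Prod.mk.injEq]
    constructor <;> ring
  · show (k + if octF (a + b) b = 7 then (1:ℤ) else 0)
        + (if octF (a + b + (b - (a + b)) + (b - (a + b))) (b - (a + b)) = 7 then 1 else 0)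
        = k + (if 4 ≤ octF a b then 1 else 0)
    rw [show a + b + (b - (a + b)) + (b - (a + b)) = b - a from by ring,
        show b - (a + b) = -a from by ring]
    -- octant chains: o1 = octF (a+b) b, o2 = octF (a+b) (-a), o3 = octF b (-a),
    -- o4 = octF (b-a) (-a)
    have eo2 : octF (a + b) (b - (a + b)) = octF (a + b) (-a) := by
      rw [show b - (a + b) = -a from by ring]
    have eo3 : octF (a + b + -a) (-a) = octF b (-a) := by
      rw [show a + b + -a = b from by ring]
    have eo4 : octF (b + -a) (-a) = octF (b - a) (-a) := by
      rw [show b + -a = b - a from by ring]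
    rcases oct8 a b with h'|h'|h'|h'|h'|h'|h'|h'
    · rcases tA0 h' with o1 | o1
      · have o2 := eo2 ▸ tB0 o1
        have o3 := eo3 ▸ tA1 o2
        have o4 := eo4 ▸ tA2 o3
        rw [if_neg (by omega), if_neg (by omega), if_neg (by omega)]; ring
      · have o2 := eo2 ▸ tB1 o1
        have o3 := eo3 ▸ tA1 o2
        have o4 := eo4 ▸ tA2 o3
        rw [if_neg (by omega), if_neg (by omega), if_neg (by omega)]; ring
    · have o1 := tA1 h'
      have o2 := eo2 ▸ tB2 o1
      have o4 : octF (b - a) (-a) = 3 := by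
        rcases o2 with o2 | o2
        · exact eo4 ▸ tA3 (eo3 ▸ tA2 o2)
        · exact eo4 ▸ tA3 (eo3 ▸ tA3 o2)
      rw [if_neg (by omega), if_neg (by omega), if_neg (by omega)]; ring
    · have o1 := tA2 h'
      have o2 := eo2 ▸ tB3 o1
      have o4 : octF (b - a) (-a) = 4 ∨ octF (b - a) (-a) = 5 ∨ octF (b - a) (-a) = 6 := by
        rcases eo3 ▸ tA4 o2 with o3 | o3
        · rcases eo4 ▸ tA4 o3 with o4 | o4
          · exact Or.inl o4
          · exact Or.inr (Or.inl o4)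
        · exact Or.inr (Or.inr (eo4 ▸ tA5 o3))
      rw [if_neg (by omega), if_neg (by omega), if_neg (by omega)]; ring
    · have o1 := tA3 h'
      have o2 := eo2 ▸ tB3 o1
      have o4 : octF (b - a) (-a) = 4 ∨ octF (b - a) (-a) = 5 ∨ octF (b - a) (-a) = 6 := by
        rcases eo3 ▸ tA4 o2 with o3 | o3
        · rcases eo4 ▸ tA4 o3 with o4 | o4
          · exact Or.inl o4
          · exact Or.inr (Or.inl o4)
        · exact Or.inr (Or.inr (eo4 ▸ tA5 o3))
      rw [if_neg (by omega), if_neg (by omega), if_neg (by omega)]; ring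
    · rcases tA4 h' with o1 | o1
      · have o2 := eo2 ▸ tB4 o1
        have o3 := eo3 ▸ tA5 o2
        have o4 := eo4 ▸ tA6 o3
        rw [if_neg (by omega), if_pos o4, if_pos (by omega)]
        ring
      · have o2 := eo2 ▸ tB5 o1
        have o3 := eo3 ▸ tA5 o2
        have o4 := eo4 ▸ tA6 o3
        rw [if_neg (by omega), if_pos o4, if_pos (by omega)]
        ring
    · have o1 := tA5 h'
      have o2 := eo2 ▸ tB6 o1
      have o4 : octF (b - a) (-a) = 7 := by
        rcases o2 with o2 | o2
        · exact eo4 ▸ tA7 (nz3 hab) (eo3 ▸ tA6 o2)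
        · exact eo4 ▸ tA7 (nz3 hab) (eo3 ▸ tA7 (nz2 hab) o2)
      rw [if_neg (by omega), if_pos o4, if_pos (by omega)]
      ring
    · have o1 := tA6 h'
      have o2 := eo2 ▸ tB7 (nz1 hab) o1
      have o4 : octF (b - a) (-a) = 0 ∨ octF (b - a) (-a) = 1 ∨ octF (b - a) (-a) = 2 := by
        rcases eo3 ▸ tA0 o2 with o3 | o3
        · rcases eo4 ▸ tA0 o3 with o4 | o4
          · exact Or.inl o4
          · exact Or.inr (Or.inl o4)
        · exact Or.inr (Or.inr (eo4 ▸ tA1 o3))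
      rw [if_pos o1, if_neg (by omega), if_pos (by omega)]; ring
    · have o1 := tA7 hab h'
      have o2 := eo2 ▸ tB7 (nz1 hab) o1
      have o4 : octF (b - a) (-a) = 0 ∨ octF (b - a) (-a) = 1 ∨ octF (b - a) (-a) = 2 := by
        rcases eo3 ▸ tA0 o2 with o3 | o3
        · rcases eo4 ▸ tA0 o3 with o4 | o4
          · exact Or.inl o4
          · exact Or.inr (Or.inl o4)
        · exact Or.inr (Or.inr (eo4 ▸ tA1 o3))
      rw [if_pos o1, if_neg (by omega), if_pos (by omega)]; ring

end BrGeo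


namespace BrGeo

lemma sigma_def (i : Fin 2) : sigma i = PresentedGroup.mk braidRel3 (FreeGroup.of i) := rfl

/-- the braid relation in `Br₃`. -/
lemma braid_rel_grp : sigma 0 * sigma 1 * sigma 0 = sigma 1 * sigma 0 * sigma 1 := by
  have hmem : (FreeGroup.of 0 * FreeGroup.of 1 * FreeGroup.of 0 *
      (FreeGroup.of 1 * FreeGroup.of 0 * FreeGroup.of 1)⁻¹ : FreeGroup (Fin 2)) ∈
      Subgroup.normalClosure braidRel3 :=
    Subgroup.subset_normalClosure rfl
  have h1 : PresentedGroup.mk braidRel3 (FreeGroup.of 0 * FreeGroup.of 1 * FreeGroup.of 0 *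
      (FreeGroup.of 1 * FreeGroup.of 0 * FreeGroup.of 1)⁻¹) = 1 :=
    (QuotientGroup.eq_one_iff _).mpr hmem
  rw [map_mul, map_mul, map_mul, map_inv, map_mul, map_mul] at h1
  rw [← sigma_def, ← sigma_def] at h1
  exact mul_inv_eq_one.mp h1

lemma ds0 : braidDelta * sigma 0 = sigma 1 * braidDelta := by
  show (sigma 0 * sigma 1 * sigma 0) * sigma 0 = sigma 1 * (sigma 0 * sigma 1 * sigma 0)
  conv_lhs => rw [braid_rel_grp]
  group

lemma ds1 : braidDelta * sigma 1 = sigma 0 * braidDelta := by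
  show (sigma 0 * sigma 1 * sigma 0) * sigma 1 = sigma 0 * (sigma 0 * sigma 1 * sigma 0)
  conv_rhs => rw [braid_rel_grp]
  group

lemma comm_d2_s0 : braidDelta ^ 2 * sigma 0 = sigma 0 * braidDelta ^ 2 := by
  rw [pow_two, mul_assoc, ds0, ← mul_assoc, ds1, mul_assoc]

lemma comm_d2_s1 : braidDelta ^ 2 * sigma 1 = sigma 1 * braidDelta ^ 2 := by
  rw [pow_two, mul_assoc, ds1, ← mul_assoc, ds0, mul_assoc]

/-- `Δ²` is central. -/
lemma d2_central (g : BraidGroup3) : braidDelta ^ 2 * g = g * braidDelta ^ 2 := by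
  have hg := PresentedGroup.generated_by braidRel3
    (Subgroup.centralizer {braidDelta ^ 2}) ?_ g
  · exact (Subgroup.mem_centralizer_iff.mp hg) _ rfl
  · intro j
    rw [Subgroup.mem_centralizer_iff]
    intro h hh
    rcases hh with rfl
    fin_cases j
    · exact comm_d2_s0
    · exact comm_d2_s1

lemma d2_commute (g : BraidGroup3) : Commute (braidDelta ^ 2) g := d2_central g

lemma dconj0 : braidDelta⁻¹ * sigma 0 * braidDelta = sigma 1 := by
  rw [mul_assoc, ← ds1]; group

lemma dconj1 : braidDelta⁻¹ * sigma 1 * braidDelta = sigma 0 := by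
  rw [mul_assoc, ← ds0]; group

/-- monotonicity of the action of every braid. -/
def monoPred (f : Equiv.Perm L) : Prop := ∀ x y : L, llt x y → llt (f x) (f y)

lemma monoPred_PA : monoPred PA := fun _ _ h => PAf_lt h
lemma monoPred_PB : monoPred PB := fun _ _ h => PBf_lt h
lemma monoPred_PAinv : monoPred (PA⁻¹) := fun _ _ h => PAg_lt h
lemma monoPred_PBinv : monoPred (PB⁻¹) := fun _ _ h => PBg_lt h

def monoSubgroup : Subgroup BraidGroup3 where
  carrier := {g | monoPred (act g) ∧ monoPred (act g⁻¹)}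
  one_mem' := by
    constructor <;> · simp only [inv_one, map_one]; exact fun x y h => h
  mul_mem' := by
    rintro g h ⟨hg1, hg2⟩ ⟨hh1, hh2⟩
    constructor
    · intro x y hxy
      rw [map_mul]
      exact hg1 _ _ (hh1 _ _ hxy)
    · intro x y hxy
      rw [mul_inv_rev, map_mul]
      exact hh2 _ _ (hg2 _ _ hxy)
  inv_mem' := by
    rintro g ⟨h1, h2⟩
    exact ⟨h2, by rwa [inv_inv]⟩

lemma act_mono (g : BraidGroup3) : monoPred (act g) := by
  have := PresentedGroup.generated_by braidRel3 monoSubgroup ?_ g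
  · exact this.1
  · intro j
    fin_cases j
    · refine ⟨?_, ?_⟩
      · show monoPred (act (sigma 0))
        rw [act_sigma0]; exact monoPred_PA
      · show monoPred (act ((sigma 0)⁻¹))
        rw [map_inv, act_sigma0]; exact monoPred_PAinv
    · refine ⟨?_, ?_⟩
      · show monoPred (act (sigma 1))
        rw [act_sigma1]; exact monoPred_PB
      · show monoPred (act ((sigma 1)⁻¹))
        rw [map_inv, act_sigma1]; exact monoPred_PBinv

lemma act_mono_lle (g : BraidGroup3) {x y : L} (h : lle x y) : lle (act g x) (act g y) := by
  rcases h with h | rfl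
  · exact Or.inl (act_mono g _ _ h)
  · exact Or.inr rfl

/-- `Jp` commutes with every `act g`. -/
lemma act_Jp_comm (g : BraidGroup3) (x : L) : act g (Jp x) = Jp (act g x) := by
  have h : g * braidDelta ^ 2 = braidDelta ^ 2 * g := (d2_central g).symm
  have := congrArg act h
  rw [map_mul, map_mul, act_delta_sq] at this
  exact congrFun (congrArg (fun (e : Equiv.Perm L) => (e : L → L)) this) x

lemma act_Jp_pow_comm (g : BraidGroup3) (n : ℕ) (x : L) :
    act g ((Jp ^ n) x) = (Jp ^ n) (act g x) := by
  induction n with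
  | zero => simp
  | succ m ih =>
      rw [pow_succ']
      show act g (Jp ((Jp ^ m) x)) = Jp ((Jp ^ m) (act g x))
      rw [act_Jp_comm, ih]

lemma Jp_mono {x y : L} (h : llt x y) : llt (Jp x) (Jp y) := by
  rw [← act_delta_sq]
  exact act_mono _ _ _ h

lemma Jp_mono_lle {x y : L} (h : lle x y) : lle (Jp x) (Jp y) := by
  rcases h with h | rfl
  · exact Or.inl (Jp_mono h)
  · exact Or.inr rfl

lemma Jp_pow_mono_lle (n : ℕ) {x y : L} (h : lle x y) : lle ((Jp ^ n) x) ((Jp ^ n) y) := by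
  induction n with
  | zero => simpa using h
  | succ m ih =>
      rw [pow_succ']
      exact Jp_mono_lle (ih)

end BrGeo


namespace BrGeo

/-- the exponent-sum homomorphism. -/
def eB : BraidGroup3 →* Multiplicative ℤ :=
  PresentedGroup.toGroup (f := fun _ => Multiplicative.ofAdd (1 : ℤ)) (by
    intro r hr
    rcases hr with rfl
    simp only [map_mul, map_inv, FreeGroup.lift_apply_of]
    group)

def eZ (g : BraidGroup3) : ℤ := Multiplicative.toAdd (eB g)

lemma eZ_mul (g h : BraidGroup3) : eZ (g * h) = eZ g + eZ h := by
  unfold eZ; rw [map_mul]; rfl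

lemma eZ_one : eZ 1 = 0 := by unfold eZ; rw [map_one]; rfl

lemma eZ_inv (g : BraidGroup3) : eZ g⁻¹ = - eZ g := by
  unfold eZ; rw [map_inv]; rfl

lemma eZ_sigma (i : Fin 2) : eZ (sigma i) = 1 := by
  unfold eZ eB sigma
  rw [PresentedGroup.toGroup.of]
  rfl

lemma eZ_pow (g : BraidGroup3) (n : ℕ) : eZ (g ^ n) = n * eZ g := by
  induction n with
  | zero => simp [eZ_one]
  | succ m ih => rw [pow_succ, eZ_mul, ih]; push_cast; ring

lemma eZ_zpow (g : BraidGroup3) (z : ℤ) : eZ (g ^ z) = z * eZ g := by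
  induction z using Int.induction_on with
  | zero => simpa using eZ_one
  | succ n ih => rw [zpow_add_one, eZ_mul, ih]; push_cast; ring
  | pred n ih => rw [zpow_sub_one, eZ_mul, ih, eZ_inv]; push_cast; ring

lemma eZ_conj (w g : BraidGroup3) : eZ (w⁻¹ * g * w) = eZ g := by
  rw [eZ_mul, eZ_mul, eZ_inv]; ring

def conjSet : Set BraidGroup3 :=
  {g : BraidGroup3 | ∃ (w : BraidGroup3) (i : Fin 2), g = w⁻¹ * sigma i * w}

lemma eZ_of_conj {y : BraidGroup3} (hy : y ∈ conjSet) : eZ y = 1 := by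
  rcases hy with ⟨w, i, rfl⟩
  rw [eZ_conj, eZ_sigma]

lemma eZ_list_prod (l : List BraidGroup3) (hl : ∀ y ∈ l, y ∈ conjSet) :
    eZ l.prod = l.length := by
  induction l with
  | nil => simpa using eZ_one
  | cons y t ih =>
      rw [List.prod_cons, eZ_mul, eZ_of_conj (hl y (by simp)),
        ih (fun z hz => hl z (by simp [hz]))]
      simp [List.length_cons]
      push_cast; ring

/-- bounds for the action of a conjugate of a generator. -/
lemma conj_bounds {y : BraidGroup3} (hy : y ∈ conjSet) (x : L) :
    lle x (act y x) ∧ llt (act y x) (Jp x) := by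
  rcases hy with ⟨w, i, rfl⟩
  have happ : act (w⁻¹ * sigma i * w) x = act w⁻¹ (act (sigma i) (act w x)) := by
    rw [map_mul, map_mul]; rfl
  have hwinv : ∀ z : L, act w⁻¹ (act w z) = z := by
    intro z
    rw [map_inv]
    exact Equiv.symm_apply_apply _ _
  set z := act w x with hz
  have hgen : lle z (act (sigma i) z) ∧ llt (act (sigma i) z) (Jp z) := by
    fin_cases i
    · show lle z (act (sigma 0) z) ∧ llt (act (sigma 0) z) (Jp z)
      rw [act_sigma0]
      exact ⟨lle_PAf z, llt_PAf_JF z⟩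
    · show lle z (act (sigma 1) z) ∧ llt (act (sigma 1) z) (Jp z)
      rw [act_sigma1]
      exact ⟨lle_PBf z, llt_PBf_JF z⟩
  constructor
  · have h1 := act_mono_lle w⁻¹ hgen.1
    rw [hwinv x] at h1
    rwa [happ]
  · have h2 : llt (act w⁻¹ (act (sigma i) z)) (act w⁻¹ (Jp z)) := act_mono w⁻¹ _ _ hgen.2
    have h3 : act w⁻¹ (Jp z) = Jp x := by
      rw [act_Jp_comm w⁻¹ z, hwinv x]
    rw [h3] at h2
    rwa [happ]

/-- bounds for the action of a product of conjugates. -/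
lemma prod_bounds (l : List BraidGroup3) (hl : ∀ y ∈ l, y ∈ conjSet) (x : L) :
    lle x (act l.prod x) ∧ lle (act l.prod x) ((Jp ^ l.length) x) := by
  induction l generalizing x with
  | nil => exact ⟨Or.inr (by simp), Or.inr (by simp)⟩
  | cons y t ih =>
      have happ : act ((y :: t).prod) x = act y (act t.prod x) := by
        rw [List.prod_cons, map_mul]; rfl
      have ihx := ih (fun z hz => hl z (by simp [hz])) x
      have hcb := conj_bounds (hl y (by simp)) (act t.prod x)
      constructor
      · rw [happ]
        exact lle_trans ihx.1 hcb.1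
      · rw [happ, List.length_cons, pow_succ']
        have h1 : llt (act y (act t.prod x)) (Jp (act t.prod x)) := hcb.2
        have h2 : lle (Jp (act t.prod x)) (Jp ((Jp ^ t.length) x)) := Jp_mono_lle ihx.2
        exact Or.inl (llt_lle_trans h1 h2)

lemma qp_lower {X : BraidGroup3} (hqp : Quasipositive X) (x : L) : lle x (act X x) := by
  rcases Submonoid.exists_list_of_mem_closure hqp with ⟨l, hl, hprod⟩
  rw [← hprod]
  exact (prod_bounds l hl x).1

-- fixed points of the generators
def fixA : L := (⟨(1, 0), by omega⟩, 0)
def fixB : L := (⟨(0, -1), by omega⟩, 0)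

lemma PA_fixA : PA fixA = fixA := by
  show PAf fixA = fixA
  unfold PAf fixA
  refine Prod.ext (Subtype.ext ?_) rfl
  show ((1:ℤ) + 0, (0:ℤ)) = (1, 0)
  norm_num

lemma PB_fixB : PB fixB = fixB := by
  show PBf fixB = fixB
  unfold PBf fixB
  refine Prod.ext (Subtype.ext ?_) ?_
  · show ((0:ℤ), (-1:ℤ) - 0) = (0, -1)
    norm_num
  · show (0:ℤ) + (if octF 0 (-1) = 7 then 1 else 0) = 0
    have h2 : octF 0 (-1) = 2 := by rw [octF2]; omega
    rw [if_neg (by omega)]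
    ring
  
lemma sigma_fix (i : Fin 2) : ∃ x0 : L, act (sigma i) x0 = x0 := by
  fin_cases i
  · refine ⟨fixA, ?_⟩
    show act (sigma 0) fixA = fixA
    rw [act_sigma0]; exact PA_fixA
  · refine ⟨fixB, ?_⟩
    show act (sigma 1) fixB = fixB
    rw [act_sigma1]; exact PB_fixB

/-- key upper bound: powers of a quasipositive braid, evaluated at a fixed point of the
last conjugate factor, advance by at most `k-1` half-turns per step. -/
lemma qp_pow_bound {X : BraidGroup3} {l1 : List BraidGroup3} {h : BraidGroup3}
    (hl1 : ∀ y ∈ l1, y ∈ conjSet) (hh : h ∈ conjSet) (hX : X = (l1.prod) * h) :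
    ∃ xs : L, ∀ m : ℕ, lle (act (X ^ m) xs) ((Jp ^ (m * l1.length)) xs) := by
  rcases hh with ⟨w, i, rfl⟩
  rcases sigma_fix i with ⟨x0, hx0⟩
  refine ⟨(act w).symm x0, ?_⟩
  have hfix : act (w⁻¹ * sigma i * w) ((act w).symm x0) = (act w).symm x0 := by
    rw [map_mul, map_mul, map_inv]
    show (act w)⁻¹ (act (sigma i) (act w ((act w).symm x0))) = _
    rw [Equiv.apply_symm_apply, hx0]
    rfl
  set xs := (act w).symm x0 with hxs
  have hXxs : act X xs = act l1.prod xs := by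
    rw [hX, map_mul]
    show act l1.prod (act (w⁻¹ * sigma i * w) xs) = _
    rw [hfix]
  intro m
  induction m with
  | zero =>
      rw [pow_zero, map_one, Nat.zero_mul, pow_zero]
      exact Or.inr rfl
  | succ m ih =>
      have e1 : act (X ^ (m + 1)) xs = act (X ^ m) (act X xs) := by
        rw [pow_succ, map_mul]; rfl
      rw [e1, hXxs]
      have h1 : lle (act l1.prod xs) ((Jp ^ l1.length) xs) := (prod_bounds l1 hl1 xs).2
      have h2 : lle (act (X ^ m) (act l1.prod xs)) (act (X ^ m) ((Jp ^ l1.length) xs)) :=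
        act_mono_lle _ h1
      have h3 : act (X ^ m) ((Jp ^ l1.length) xs) = (Jp ^ l1.length) (act (X ^ m) xs) :=
        act_Jp_pow_comm _ _ _
      have h4 : lle ((Jp ^ l1.length) (act (X ^ m) xs))
          ((Jp ^ l1.length) ((Jp ^ (m * l1.length)) xs)) := Jp_pow_mono_lle _ ih
      have h5 : (Jp ^ l1.length) ((Jp ^ (m * l1.length)) xs)
          = (Jp ^ ((m + 1) * l1.length)) xs := by
        rw [← Equiv.Perm.mul_apply, ← pow_add]
        congr 2
        ring
      refine lle_trans h2 ?_
      rw [h3]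
      refine lle_trans h4 ?_
      exact Or.inr h5

end BrGeo


namespace BrGeo

lemma altFactors_map {M N : Type*} [Monoid M] [Monoid N] (f : M →* N) (g h : M)
    (as : List ℕ) : f (altFactors g h as) = altFactors (f g) (f h) as := by
  induction as generalizing g h with
  | nil => simp [altFactors]
  | cons a t ih => simp [altFactors, map_mul, map_pow, ih]

lemma altFactors_append {M : Type*} [Monoid M] (g h : M) (as bs : List ℕ) :
    altFactors g h (as ++ bs) = altFactors g h as *
      (if Even as.length then altFactors g h bs else altFactors h g bs) := by
  induction as generalizing g h with
  | nil => simp [altFactors]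
  | cons a t ih =>
      show altFactors g h (a :: (t ++ bs)) = _
      rw [altFactors, ih h g]
      by_cases he : Even t.length
      · rw [if_pos he, if_neg (by simp [Nat.even_add_one, he]), altFactors, mul_assoc]
      · rw [if_neg he, if_pos (by simp [Nat.even_add_one, he]), altFactors, mul_assoc]

lemma altFactors_pow {M : Type*} [Monoid M] (g h : M) (bs : List ℕ)
    (hbs : Even bs.length) (m : ℕ) :
    (altFactors g h bs) ^ m = altFactors g h (List.flatten (List.replicate m bs)) := by
  induction m with
  | zero => simp [altFactors]
  | succ m ih =>
      rw [List.replicate_succ, List.flatten_cons, altFactors_append, if_pos hbs, ← ih, pow_succ']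

lemma length_join_replicate (m : ℕ) (bs : List ℕ) :
    (List.flatten (List.replicate m bs)).length = m * bs.length := by
  induction m with
  | zero => simp
  | succ m ih => rw [List.replicate_succ, List.flatten_cons, List.length_append, ih]; ring

lemma mem_join_replicate {m : ℕ} {bs : List ℕ} {a : ℕ}
    (h : a ∈ List.flatten (List.replicate m bs)) : a ∈ bs := by
  induction m with
  | zero => simp at h
  | succ m ih =>
      rw [List.replicate_succ, List.flatten_cons, List.mem_append] at h
      rcases h with h | h
      · exact h
      · exact ih h

lemma eZ_alt (i j : Fin 2) (as : List ℕ) :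
    eZ (altFactors (sigma i) (sigma j) as) = (as.sum : ℤ) := by
  induction as generalizing i j with
  | nil => simpa [altFactors] using eZ_one
  | cons a t ih =>
      rw [altFactors, eZ_mul, eZ_pow, eZ_sigma, ih j i, List.sum_cons]
      push_cast; ring

lemma eZ_delta : eZ braidDelta = 3 := by
  unfold braidDelta
  rw [eZ_mul, eZ_mul, eZ_sigma, eZ_sigma]
  norm_num

lemma eZ_Xbraid (p : ℤ) (as : List ℕ) : eZ (Xbraid p as) = 3 * p + (as.sum : ℤ) := by
  unfold Xbraid
  rw [eZ_mul, eZ_zpow, eZ_delta, eZ_alt]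
  ring

/-- conjugation by `Δ` swaps the two kinds of alternating words. -/
lemma delta_conj_alt (as : List ℕ) :
    braidDelta⁻¹ * altFactors (sigma 0) (sigma 1) as * braidDelta =
      altFactors (sigma 1) (sigma 0) as := by
  have hmap := altFactors_map (MulAut.conj (braidDelta⁻¹ : BraidGroup3)).toMonoidHom
    (sigma 0) (sigma 1) as
  have happ : ∀ g : BraidGroup3, (MulAut.conj (braidDelta⁻¹ : BraidGroup3)).toMonoidHom g
      = braidDelta⁻¹ * g * braidDelta := by
    intro g
    show braidDelta⁻¹ * g * (braidDelta⁻¹)⁻¹ = braidDelta⁻¹ * g * braidDelta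
    rw [inv_inv]
  rw [happ, happ, happ, dconj0, dconj1] at hmap
  rw [mul_assoc] at hmap ⊢
  exact hmap

lemma delta_zpow_two (z : ℤ) : (braidDelta ^ (2:ℤ)) ^ z = (braidDelta ^ 2) ^ z := by
  norm_cast

/-- `X(p,a⃗)² = (Δ²)ᵖ · V` with `V` an explicit alternating word. -/
lemma Xsq_even {p : ℤ} (hp : Even p) (as : List ℕ) :
    (Xbraid p as) ^ 2 = ((braidDelta ^ 2) ^ p) *
      (altFactors (sigma 0) (sigma 1) as * altFactors (sigma 0) (sigma 1) as) := by
  obtain ⟨r, hr⟩ := hp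
  set W := altFactors (sigma 0) (sigma 1) as with hW
  have hc : Commute (braidDelta ^ (p:ℤ)) W := by
    have : braidDelta ^ (p : ℤ) = (braidDelta ^ 2) ^ r := by
      rw [hr, ← delta_zpow_two, ← zpow_mul]
      congr 1
      ring
    rw [this]
    exact (d2_commute W).zpow_left r
  unfold Xbraid
  rw [← hW, (hc.mul_pow 2)]
  have e1 : (braidDelta ^ (p:ℤ)) ^ (2:ℕ) = (braidDelta ^ 2) ^ p := by
    rw [← zpow_natCast (braidDelta ^ (p:ℤ)) 2, ← zpow_mul,
      show p * ((2:ℕ):ℤ) = 2 * p by push_cast; ring, zpow_mul, delta_zpow_two]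
  have e2 : W ^ (2:ℕ) = W * W := pow_two W
  rw [e1, e2]

lemma Xsq_odd {p : ℤ} (hp : ¬ Even p) (as : List ℕ) :
    (Xbraid p as) ^ 2 = ((braidDelta ^ 2) ^ p) *
      (altFactors (sigma 1) (sigma 0) as * altFactors (sigma 0) (sigma 1) as) := by
  rw [Int.not_even_iff_odd] at hp
  obtain ⟨r, hr⟩ := hp
  set W := altFactors (sigma 0) (sigma 1) as with hW
  have hdp : braidDelta ^ (p : ℤ) = (braidDelta ^ 2) ^ r * braidDelta := by
    rw [hr, zpow_add, zpow_one, ← delta_zpow_two, ← zpow_mul]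
  have hcr : ∀ g : BraidGroup3, Commute ((braidDelta ^ 2) ^ r) g :=
    fun g => (d2_commute g).zpow_left r
  unfold Xbraid
  rw [← hW, hdp]
  have key : ((braidDelta ^ 2) ^ r * braidDelta * W) ^ 2
      = ((braidDelta ^ 2) ^ r) ^ 2 * (braidDelta * W * (braidDelta * W)) := by
    have hc2 : Commute ((braidDelta ^ 2) ^ r) (braidDelta * W) := hcr _
    rw [mul_assoc, (hc2.mul_pow 2), pow_two (braidDelta * W)]
  rw [key]
  have key2 : braidDelta * W * (braidDelta * W)
      = braidDelta ^ 2 * ((braidDelta⁻¹ * W * braidDelta) * W) := by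
    group
  rw [key2, delta_conj_alt]
  have key3 : ((braidDelta ^ 2) ^ r) ^ (2:ℕ) * braidDelta ^ 2 = (braidDelta ^ 2) ^ p := by
    have e1 : ((braidDelta ^ 2) ^ r) ^ (2:ℕ) = (braidDelta ^ 2) ^ (2 * r) := by
      rw [← zpow_natCast ((braidDelta ^ 2) ^ r) 2, ← zpow_mul]
      congr 1
      push_cast; ring
    rw [e1, ← zpow_add_one]
    congr 1
    omega
  rw [← mul_assoc, key3]

lemma act_C_zpow (z : ℤ) : act ((braidDelta ^ 2) ^ z) = Jp ^ z := by
  rw [map_zpow, act_delta_sq]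

/-- `X(p,a⃗)^{2m}` decomposes as a power of `Δ²` times an explicit alternating word. -/
lemma X_pow_decomp (p : ℤ) (as : List ℕ) (m : ℕ) (hn : Even (as.length)) (hp : Even p) :
    (Xbraid p as) ^ (2 * m) = ((braidDelta ^ 2) ^ (p * m)) *
      altFactors (sigma 0) (sigma 1) (List.flatten (List.replicate m (as ++ as))) := by
  rw [pow_mul, Xsq_even hp]
  have he : Even ((as ++ as).length) := by
    rw [List.length_append]
    exact ⟨as.length, rfl⟩
  rw [show altFactors (sigma 0) (sigma 1) as * altFactors (sigma 0) (sigma 1) as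
      = altFactors (sigma 0) (sigma 1) (as ++ as) from by
    rw [altFactors_append, if_pos hn]]
  have hc : Commute ((braidDelta ^ 2) ^ (p:ℤ)) (altFactors (sigma 0) (sigma 1) (as ++ as)) :=
    (d2_commute _).zpow_left p
  rw [hc.mul_pow m, ← zpow_natCast ((braidDelta ^ 2) ^ (p:ℤ)) m, ← zpow_mul,
    altFactors_pow _ _ _ he]

lemma X_pow_decomp_odd (p : ℤ) (as : List ℕ) (m : ℕ) (hn : ¬ Even (as.length))
    (hp : ¬ Even p) :
    (Xbraid p as) ^ (2 * m) = ((braidDelta ^ 2) ^ (p * m)) *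
      altFactors (sigma 1) (sigma 0) (List.flatten (List.replicate m (as ++ as))) := by
  rw [pow_mul, Xsq_odd hp]
  have he : Even ((as ++ as).length) := by
    rw [List.length_append]
    exact ⟨as.length, rfl⟩
  rw [show altFactors (sigma 1) (sigma 0) as * altFactors (sigma 0) (sigma 1) as
      = altFactors (sigma 1) (sigma 0) (as ++ as) from by
    rw [altFactors_append, if_neg hn]]
  have hc : Commute ((braidDelta ^ 2) ^ (p:ℤ)) (altFactors (sigma 1) (sigma 0) (as ++ as)) :=
    (d2_commute _).zpow_left p
  rw [hc.mul_pow m, ← zpow_natCast ((braidDelta ^ 2) ^ (p:ℤ)) m, ← zpow_mul,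
    altFactors_pow _ _ _ he]

end BrGeo


namespace BrGeo

lemma pow_apply_succ (f : Equiv.Perm L) (m : ℕ) (x : L) :
    (f ^ (m + 1)) x = (f ^ m) (f x) := by
  rw [pow_succ]
  rfl

lemma pow_apply_zero (f : Equiv.Perm L) (x : L) : (f ^ 0) x = x := by
  rw [pow_zero]
  rfl

lemma PB_k_ne7 {x : L} (h : octF x.1.1.1 x.1.1.2 ≠ 7) : (PB x).2 = x.2 := by
  show x.2 + (if octF x.1.1.1 x.1.1.2 = 7 then 1 else 0) = x.2
  rw [if_neg h]; ring

lemma PB_k_7 {x : L} (h : octF x.1.1.1 x.1.1.2 = 7) : (PB x).2 = x.2 + 1 := by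
  show x.2 + (if octF x.1.1.1 x.1.1.2 = 7 then 1 else 0) = x.2 + 1
  rw [if_pos h]

-- A-blocks
lemma PApow3 (a : ℕ) : ∀ {x : L}, octF x.1.1.1 x.1.1.2 = 3 →
    octF ((PA^a) x).1.1.1 ((PA^a) x).1.1.2 = 3 ∧ ((PA^a) x).2 = x.2 := by
  induction a with
  | zero => intro x h; rw [pow_apply_zero]; exact ⟨h, rfl⟩
  | succ m ih =>
      intro x h
      rw [pow_apply_succ]
      have h1 : octF (PA x).1.1.1 (PA x).1.1.2 = 3 := tA3 h
      have := ih h1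
      exact ⟨this.1, this.2.trans rfl⟩

lemma PApow7 (a : ℕ) : ∀ {x : L}, octF x.1.1.1 x.1.1.2 = 7 →
    octF ((PA^a) x).1.1.1 ((PA^a) x).1.1.2 = 7 ∧ ((PA^a) x).2 = x.2 := by
  induction a with
  | zero => intro x h; rw [pow_apply_zero]; exact ⟨h, rfl⟩
  | succ m ih =>
      intro x h
      rw [pow_apply_succ]
      have h1 : octF (PA x).1.1.1 (PA x).1.1.2 = 7 := tA7 x.1.2 h
      have := ih h1
      exact ⟨this.1, this.2.trans rfl⟩

lemma PApow2 {a : ℕ} (ha : 1 ≤ a) : ∀ {x : L}, octF x.1.1.1 x.1.1.2 = 2 →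
    octF ((PA^a) x).1.1.1 ((PA^a) x).1.1.2 = 3 ∧ ((PA^a) x).2 = x.2 := by
  intro x h
  obtain ⟨m, rfl⟩ : ∃ m, a = m + 1 := ⟨a - 1, by omega⟩
  rw [pow_apply_succ]
  have h1 : octF (PA x).1.1.1 (PA x).1.1.2 = 3 := tA2 h
  have := PApow3 m h1
  exact ⟨this.1, this.2.trans rfl⟩

lemma PApow1 {a : ℕ} (ha : 2 ≤ a) : ∀ {x : L}, octF x.1.1.1 x.1.1.2 = 1 →
    octF ((PA^a) x).1.1.1 ((PA^a) x).1.1.2 = 3 ∧ ((PA^a) x).2 = x.2 := by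
  intro x h
  obtain ⟨m, rfl⟩ : ∃ m, a = m + 1 := ⟨a - 1, by omega⟩
  rw [pow_apply_succ]
  have h1 : octF (PA x).1.1.1 (PA x).1.1.2 = 2 := tA1 h
  have := PApow2 (a := m) (by omega) h1
  exact ⟨this.1, this.2.trans rfl⟩

lemma PApow6 {a : ℕ} (ha : 1 ≤ a) : ∀ {x : L}, octF x.1.1.1 x.1.1.2 = 6 →
    octF ((PA^a) x).1.1.1 ((PA^a) x).1.1.2 = 7 ∧ ((PA^a) x).2 = x.2 := by
  intro x h
  obtain ⟨m, rfl⟩ : ∃ m, a = m + 1 := ⟨a - 1, by omega⟩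
  rw [pow_apply_succ]
  have h1 : octF (PA x).1.1.1 (PA x).1.1.2 = 7 := tA6 h
  have := PApow7 m h1
  exact ⟨this.1, this.2.trans rfl⟩

lemma PApow5 {a : ℕ} (ha : 2 ≤ a) : ∀ {x : L}, octF x.1.1.1 x.1.1.2 = 5 →
    octF ((PA^a) x).1.1.1 ((PA^a) x).1.1.2 = 7 ∧ ((PA^a) x).2 = x.2 := by
  intro x h
  obtain ⟨m, rfl⟩ : ∃ m, a = m + 1 := ⟨a - 1, by omega⟩
  rw [pow_apply_succ]
  have h1 : octF (PA x).1.1.1 (PA x).1.1.2 = 6 := tA5 h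
  have := PApow6 (a := m) (by omega) h1
  exact ⟨this.1, this.2.trans rfl⟩

lemma PApow_fixA (a : ℕ) : (PA ^ a) fixA = fixA := by
  induction a with
  | zero => rw [pow_apply_zero]
  | succ m ih => rw [pow_apply_succ, PA_fixA, ih]

-- B-blocks
lemma PBpow1 (b : ℕ) : ∀ {x : L}, octF x.1.1.1 x.1.1.2 = 1 →
    octF ((PB^b) x).1.1.1 ((PB^b) x).1.1.2 = 1 ∧ ((PB^b) x).2 = x.2 := by
  induction b with
  | zero => intro x h; rw [pow_apply_zero]; exact ⟨h, rfl⟩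
  | succ m ih =>
      intro x h
      rw [pow_apply_succ]
      have h1 : octF (PB x).1.1.1 (PB x).1.1.2 = 1 := tB1 h
      have := ih h1
      exact ⟨this.1, this.2.trans (PB_k_ne7 (by omega))⟩

lemma PBpow5 (b : ℕ) : ∀ {x : L}, octF x.1.1.1 x.1.1.2 = 5 →
    octF ((PB^b) x).1.1.1 ((PB^b) x).1.1.2 = 5 ∧ ((PB^b) x).2 = x.2 := by
  induction b with
  | zero => intro x h; rw [pow_apply_zero]; exact ⟨h, rfl⟩
  | succ m ih =>
      intro x h
      rw [pow_apply_succ]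
      have h1 : octF (PB x).1.1.1 (PB x).1.1.2 = 5 := tB5 h
      have := ih h1
      exact ⟨this.1, this.2.trans (PB_k_ne7 (by omega))⟩

lemma PBpow0 {b : ℕ} (hb : 1 ≤ b) : ∀ {x : L}, octF x.1.1.1 x.1.1.2 = 0 →
    octF ((PB^b) x).1.1.1 ((PB^b) x).1.1.2 = 1 ∧ ((PB^b) x).2 = x.2 := by
  intro x h
  obtain ⟨m, rfl⟩ : ∃ m, b = m + 1 := ⟨b - 1, by omega⟩
  rw [pow_apply_succ]
  have h1 : octF (PB x).1.1.1 (PB x).1.1.2 = 1 := tB0 h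
  have := PBpow1 m h1
  exact ⟨this.1, this.2.trans (PB_k_ne7 (by omega))⟩

lemma PBpow4 {b : ℕ} (hb : 1 ≤ b) : ∀ {x : L}, octF x.1.1.1 x.1.1.2 = 4 →
    octF ((PB^b) x).1.1.1 ((PB^b) x).1.1.2 = 5 ∧ ((PB^b) x).2 = x.2 := by
  intro x h
  obtain ⟨m, rfl⟩ : ∃ m, b = m + 1 := ⟨b - 1, by omega⟩
  rw [pow_apply_succ]
  have h1 : octF (PB x).1.1.1 (PB x).1.1.2 = 5 := tB4 h
  have := PBpow5 m h1
  exact ⟨this.1, this.2.trans (PB_k_ne7 (by omega))⟩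

lemma PBpow3 {b : ℕ} (hb : 2 ≤ b) : ∀ {x : L}, octF x.1.1.1 x.1.1.2 = 3 →
    octF ((PB^b) x).1.1.1 ((PB^b) x).1.1.2 = 5 ∧ ((PB^b) x).2 = x.2 := by
  intro x h
  obtain ⟨m, rfl⟩ : ∃ m, b = m + 1 := ⟨b - 1, by omega⟩
  rw [pow_apply_succ]
  have h1 : octF (PB x).1.1.1 (PB x).1.1.2 = 4 := tB3 h
  have := PBpow4 (b := m) (by omega) h1
  exact ⟨this.1, this.2.trans (PB_k_ne7 (by omega))⟩

lemma PBpow7 {b : ℕ} (hb : 2 ≤ b) : ∀ {x : L}, octF x.1.1.1 x.1.1.2 = 7 →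
    octF ((PB^b) x).1.1.1 ((PB^b) x).1.1.2 = 1 ∧ ((PB^b) x).2 = x.2 + 1 := by
  intro x h
  obtain ⟨m, rfl⟩ : ∃ m, b = m + 1 := ⟨b - 1, by omega⟩
  rw [pow_apply_succ]
  have h1 : octF (PB x).1.1.1 (PB x).1.1.2 = 0 := tB7 x.1.2 h
  have := PBpow0 (b := m) (by omega) h1
  exact ⟨this.1, this.2.trans (PB_k_7 h)⟩

lemma PBpow_fixB (b : ℕ) : (PB ^ b) fixB = fixB := by
  induction b with
  | zero => rw [pow_apply_zero]
  | succ m ih => rw [pow_apply_succ, PB_fixB, ih]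

end BrGeo


namespace BrGeo

lemma act_s0_pow (a : ℕ) : act (sigma 0 ^ a) = PA ^ a := by rw [map_pow, act_sigma0]
lemma act_s1_pow (a : ℕ) : act (sigma 1 ^ a) = PB ^ a := by rw [map_pow, act_sigma1]

lemma lam_fixA : lam fixA = 0 := by
  show 8 * 0 + octF 1 0 = 0
  have : octF 1 0 = 0 := octF0.mpr (by omega)
  omega

lemma lam_fixB : lam fixB = 2 := by
  show 8 * 0 + octF 0 (-1) = 2
  have : octF 0 (-1) = 2 := octF2.mpr (by omega)
  omega

lemma act_alt_cons (i j : Fin 2) (a : ℕ) (t : List ℕ) (x : L) :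
    act (altFactors (sigma i) (sigma j) (a :: t)) x
      = (act (sigma i ^ a)) (act (altFactors (sigma j) (sigma i) t) x) := by
  show act (sigma i ^ a * altFactors (sigma j) (sigma i) t) x = _
  rw [map_mul]
  rfl

/-- trajectory computation at the `σ₂`-fixed point (used when `p` is even). -/
lemma trajB : ∀ (as : List ℕ), (∀ a ∈ as, 2 ≤ a) → as ≠ [] →
    (¬ Even as.length →
      lam (act (altFactors (sigma 1) (sigma 0) as) fixB)
        = if as.length = 1 then 2 else 2 * (as.length : ℤ) - 1) ∧
    (Even as.length →
      lam (act (altFactors (sigma 0) (sigma 1) as) fixB) = 2 * (as.length : ℤ) - 1) := by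
  intro as
  induction as with
  | nil => exact fun _ hne => absurd rfl hne
  | cons a t ih =>
      intro h2 _
      have ha : 2 ≤ a := h2 a (by simp)
      have h2t : ∀ b ∈ t, 2 ≤ b := fun b hb => h2 b (by simp [hb])
      constructor
      · -- the word σ₂^a ⋯ of odd length at fixB
        intro hodd
        have ht_even : Even t.length := by
          rw [List.length_cons, Nat.even_add_one] at hodd
          exact not_not.mp hodd
        rw [act_alt_cons, act_s1_pow]
        by_cases ht : t = []
        · subst ht
          have e0 : act (altFactors (sigma 0) (sigma 1) []) fixB = fixB := by
            show act 1 fixB = fixB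
            rw [map_one]
            rfl
          rw [e0, show (PB ^ a) fixB = fixB from PBpow_fixB a, if_pos (by simp), lam_fixB]
        · have hval := (ih h2t ht).2 ht_even
          set y := act (altFactors (sigma 0) (sigma 1) t) fixB with hy
          have hL0 : t.length ≠ 0 := by
            simpa [List.length_eq_zero_iff] using ht
          obtain ⟨u, hu⟩ := ht_even
          have hL2 : 2 ≤ t.length := by omega
          have hrange := @octF_range y.1.1.1 y.1.1.2
          have hlam : 8 * y.2 + octF y.1.1.1 y.1.1.2 = 2 * (t.length:ℤ) - 1 := hval
          have hcase : octF y.1.1.1 y.1.1.2 = 3 ∨ octF y.1.1.1 y.1.1.2 = 7 := by omega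
          have hne1 : ¬((a :: t).length = 1) := by
            simp only [List.length_cons]
            omega
          rw [if_neg hne1]
          rcases hcase with ho | ho
          · obtain ⟨ho', hk⟩ := PBpow3 (b := a) ha ho
            have : lam ((PB ^ a) y) = 8 * ((PB ^ a) y).2 + octF ((PB ^ a) y).1.1.1 ((PB ^ a) y).1.1.2 := rfl
            rw [this, ho', hk]
            simp only [List.length_cons]
            push_cast
            omega
          · obtain ⟨ho', hk⟩ := PBpow7 (b := a) ha ho
            have : lam ((PB ^ a) y) = 8 * ((PB ^ a) y).2 + octF ((PB ^ a) y).1.1.1 ((PB ^ a) y).1.1.2 := rfl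
            rw [this, ho', hk]
            simp only [List.length_cons]
            push_cast
            omega
      · -- the word σ₁^a ⋯ of even length at fixB
        intro heven
        have ht_odd : ¬ Even t.length := by
          rw [List.length_cons, Nat.even_add_one] at heven
          exact heven
        have ht : t ≠ [] := by
          intro hnil
          rw [hnil] at ht_odd
          exact ht_odd (by simp)
        rw [act_alt_cons, act_s0_pow]
        have hval := (ih h2t ht).1 ht_odd
        set y := act (altFactors (sigma 1) (sigma 0) t) fixB with hy
        have hrange := @octF_range y.1.1.1 y.1.1.2
        by_cases h1 : t.length = 1
        · have hlam : 8 * y.2 + octF y.1.1.1 y.1.1.2 = 2 := by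
            have := hval; rw [if_pos h1] at this; exact this
          have ho : octF y.1.1.1 y.1.1.2 = 2 := by omega
          obtain ⟨ho', hk⟩ := PApow2 (a := a) (by omega) ho
          have e : lam ((PA ^ a) y) = 8 * ((PA ^ a) y).2 + octF ((PA ^ a) y).1.1.1 ((PA ^ a) y).1.1.2 := rfl
          rw [e, ho', hk]
          simp only [List.length_cons]
          push_cast
          omega
        · have hlam : 8 * y.2 + octF y.1.1.1 y.1.1.2 = 2 * (t.length:ℤ) - 1 := by
            have := hval; rw [if_neg h1] at this; exact this
          obtain ⟨u, hu⟩ := Nat.not_even_iff_odd.mp ht_odd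
          have hcase : octF y.1.1.1 y.1.1.2 = 1 ∨ octF y.1.1.1 y.1.1.2 = 5 := by omega
          rcases hcase with ho | ho
          · obtain ⟨ho', hk⟩ := PApow1 (a := a) ha ho
            have e : lam ((PA ^ a) y) = 8 * ((PA ^ a) y).2 + octF ((PA ^ a) y).1.1.1 ((PA ^ a) y).1.1.2 := rfl
            rw [e, ho', hk]
            simp only [List.length_cons]
            push_cast
            omega
          · obtain ⟨ho', hk⟩ := PApow5 (a := a) ha ho
            have e : lam ((PA ^ a) y) = 8 * ((PA ^ a) y).2 + octF ((PA ^ a) y).1.1.1 ((PA ^ a) y).1.1.2 := rfl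
            rw [e, ho', hk]
            simp only [List.length_cons]
            push_cast
            omega

/-- trajectory computation at the `σ₁`-fixed point (used when `p` is odd). -/
lemma trajO : ∀ (as : List ℕ), (∀ a ∈ as, 2 ≤ a) → as ≠ [] →
    (¬ Even as.length →
      lam (act (altFactors (sigma 0) (sigma 1) as) fixA)
        = if as.length = 1 then 0 else 2 * (as.length : ℤ) - 3) ∧
    (Even as.length →
      lam (act (altFactors (sigma 1) (sigma 0) as) fixA) = 2 * (as.length : ℤ) - 3) := by
  intro as
  induction as with
  | nil => exact fun _ hne => absurd rfl hne
  | cons a t ih =>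
      intro h2 _
      have ha : 2 ≤ a := h2 a (by simp)
      have h2t : ∀ b ∈ t, 2 ≤ b := fun b hb => h2 b (by simp [hb])
      constructor
      · intro hodd
        have ht_even : Even t.length := by
          rw [List.length_cons, Nat.even_add_one] at hodd
          exact not_not.mp hodd
        rw [act_alt_cons, act_s0_pow]
        by_cases ht : t = []
        · subst ht
          have e0 : act (altFactors (sigma 1) (sigma 0) []) fixA = fixA := by
            show act 1 fixA = fixA
            rw [map_one]
            rfl
          rw [e0, show (PA ^ a) fixA = fixA from PApow_fixA a, if_pos (by simp), lam_fixA]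
        · have hval := (ih h2t ht).2 ht_even
          set y := act (altFactors (sigma 1) (sigma 0) t) fixA with hy
          have hL0 : t.length ≠ 0 := by
            simpa [List.length_eq_zero_iff] using ht
          obtain ⟨u, hu⟩ := ht_even
          have hL2 : 2 ≤ t.length := by omega
          have hrange := @octF_range y.1.1.1 y.1.1.2
          have hlam : 8 * y.2 + octF y.1.1.1 y.1.1.2 = 2 * (t.length:ℤ) - 3 := hval
          have hcase : octF y.1.1.1 y.1.1.2 = 1 ∨ octF y.1.1.1 y.1.1.2 = 5 := by omega
          have hne1 : ¬((a :: t).length = 1) := by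
            simp only [List.length_cons]
            omega
          rw [if_neg hne1]
          rcases hcase with ho | ho
          · obtain ⟨ho', hk⟩ := PApow1 (a := a) ha ho
            have e : lam ((PA ^ a) y) = 8 * ((PA ^ a) y).2 + octF ((PA ^ a) y).1.1.1 ((PA ^ a) y).1.1.2 := rfl
            rw [e, ho', hk]
            simp only [List.length_cons]
            push_cast
            omega
          · obtain ⟨ho', hk⟩ := PApow5 (a := a) ha ho
            have e : lam ((PA ^ a) y) = 8 * ((PA ^ a) y).2 + octF ((PA ^ a) y).1.1.1 ((PA ^ a) y).1.1.2 := rfl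
            rw [e, ho', hk]
            simp only [List.length_cons]
            push_cast
            omega
      · intro heven
        have ht_odd : ¬ Even t.length := by
          rw [List.length_cons, Nat.even_add_one] at heven
          exact heven
        have ht : t ≠ [] := by
          intro hnil
          rw [hnil] at ht_odd
          exact ht_odd (by simp)
        rw [act_alt_cons, act_s1_pow]
        have hval := (ih h2t ht).1 ht_odd
        set y := act (altFactors (sigma 0) (sigma 1) t) fixA with hy
        have hrange := @octF_range y.1.1.1 y.1.1.2
        by_cases h1 : t.length = 1
        · have hlam : 8 * y.2 + octF y.1.1.1 y.1.1.2 = 0 := by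
            have := hval; rw [if_pos h1] at this; exact this
          have ho : octF y.1.1.1 y.1.1.2 = 0 := by omega
          obtain ⟨ho', hk⟩ := PBpow0 (b := a) (by omega) ho
          have e : lam ((PB ^ a) y) = 8 * ((PB ^ a) y).2 + octF ((PB ^ a) y).1.1.1 ((PB ^ a) y).1.1.2 := rfl
          rw [e, ho', hk]
          simp only [List.length_cons]
          push_cast
          omega
        · have hlam : 8 * y.2 + octF y.1.1.1 y.1.1.2 = 2 * (t.length:ℤ) - 3 := by
            have := hval; rw [if_neg h1] at this; exact this
          obtain ⟨u, hu⟩ := Nat.not_even_iff_odd.mp ht_odd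
          have hcase : octF y.1.1.1 y.1.1.2 = 3 ∨ octF y.1.1.1 y.1.1.2 = 7 := by omega
          rcases hcase with ho | ho
          · obtain ⟨ho', hk⟩ := PBpow3 (b := a) ha ho
            have e : lam ((PB ^ a) y) = 8 * ((PB ^ a) y).2 + octF ((PB ^ a) y).1.1.1 ((PB ^ a) y).1.1.2 := rfl
            rw [e, ho', hk]
            simp only [List.length_cons]
            push_cast
            omega
          · obtain ⟨ho', hk⟩ := PBpow7 (b := a) ha ho
            have e : lam ((PB ^ a) y) = 8 * ((PB ^ a) y).2 + octF ((PB ^ a) y).1.1.1 ((PB ^ a) y).1.1.2 := rfl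
            rw [e, ho', hk]
            simp only [List.length_cons]
            push_cast
            omega

end BrGeo


namespace BrGeo

lemma qp_sq_lower {p : ℤ} {as : List ℕ} (hqp : Quasipositive (Xbraid p as)) (x : L) :
    lle x (act ((Xbraid p as) ^ 2) x) := by
  have h1 := qp_lower hqp x
  have h2 := act_mono_lle (Xbraid p as) h1
  have e : act ((Xbraid p as) ^ 2) x = act (Xbraid p as) (act (Xbraid p as) x) := by
    rw [pow_two, map_mul]
    rfl
  rw [e]
  exact lle_trans h1 h2

lemma act_Xsq_even {p : ℤ} (hp : Even p) (as : List ℕ) (x : L) :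
    act ((Xbraid p as) ^ 2) x = (Jp ^ p)
      (act (altFactors (sigma 0) (sigma 1) as) (act (altFactors (sigma 0) (sigma 1) as) x)) := by
  rw [Xsq_even hp, map_mul, map_mul, act_C_zpow]
  rfl

lemma act_Xsq_odd {p : ℤ} (hp : ¬ Even p) (as : List ℕ) (x : L) :
    act ((Xbraid p as) ^ 2) x = (Jp ^ p)
      (act (altFactors (sigma 1) (sigma 0) as) (act (altFactors (sigma 0) (sigma 1) as) x)) := by
  rw [Xsq_odd hp, map_mul, map_mul, act_C_zpow]
  rfl

lemma alt_nil_act (i j : Fin 2) (x : L) : act (altFactors (sigma i) (sigma j) []) x = x := by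
  show act 1 x = x
  rw [map_one]
  rfl

lemma alt_single_act (i j : Fin 2) (a : ℕ) (x : L) :
    act (altFactors (sigma i) (sigma j) [a]) x = (act (sigma i ^ a)) x := by
  rw [act_alt_cons, alt_nil_act]

/-- vacuous case: `as = []`. -/
lemma vac_nil {p : ℤ} (hp : p < 0) (hqp : Quasipositive (Xbraid p [])) : False := by
  have hlow := qp_sq_lower hqp fixA
  have hlam : lam (act ((Xbraid p []) ^ 2) fixA) = 4 * p := by
    by_cases he : Even p
    · rw [act_Xsq_even he, alt_nil_act, alt_nil_act, lam_Jp_zpow, lam_fixA]; ring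
    · rw [act_Xsq_odd he, alt_nil_act, alt_nil_act, lam_Jp_zpow, lam_fixA]; ring
  have := lam_le_of_lle hlow
  rw [hlam, lam_fixA] at this
  omega

/-- vacuous case: `as = [a]`. -/
lemma vac_single {p : ℤ} {a : ℕ} (hp : p < 0) (ha : 1 ≤ a)
    (hqp : Quasipositive (Xbraid p [a])) : False := by
  have hlow := qp_sq_lower hqp fixA
  have hfix : act (altFactors (sigma 0) (sigma 1) [a]) fixA = fixA := by
    rw [alt_single_act, act_s0_pow, PApow_fixA]
  by_cases he : Even p
  · have hlam : lam (act ((Xbraid p [a]) ^ 2) fixA) = 4 * p := by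
      rw [act_Xsq_even he, hfix, hfix, lam_Jp_zpow, lam_fixA]; ring
    have := lam_le_of_lle hlow
    rw [hlam, lam_fixA] at this
    omega
  · have hlam : lam (act ((Xbraid p [a]) ^ 2) fixA) = 1 + 4 * p := by
      rw [act_Xsq_odd he, hfix, alt_single_act, act_s1_pow]
      have h0 : octF fixA.1.1.1 fixA.1.1.2 = 0 := by
        show octF 1 0 = 0
        exact octF0.mpr (by omega)
      obtain ⟨ho, hk⟩ := PBpow0 (b := a) ha h0
      have e : lam ((Jp ^ p) ((PB ^ a) fixA)) = lam ((PB ^ a) fixA) + 4 * p :=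
        lam_Jp_zpow p _
      rw [e]
      have e2 : lam ((PB ^ a) fixA)
          = 8 * ((PB ^ a) fixA).2 + octF ((PB ^ a) fixA).1.1.1 ((PB ^ a) fixA).1.1.2 := rfl
      rw [e2, ho, hk]
      show 8 * (0:ℤ) + 1 + 4 * p = 1 + 4 * p
      ring
    have := lam_le_of_lle hlow
    rw [hlam, lam_fixA] at this
    omega

/-- vacuous case: `as = [1,1]`, `p` even. -/
lemma vac_pair {p : ℤ} (hp : p < 0) (he : Even p)
    (hqp : Quasipositive (Xbraid p [1, 1])) : False := by
  have hlow := qp_sq_lower hqp fixB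
  -- z = act (alt [1,1]) fixB = PA (PB fixB) = PA fixB
  have hinner : act (altFactors (sigma 1) (sigma 0) [1]) fixB = fixB := by
    rw [alt_single_act, act_s1_pow, pow_one, PB_fixB]
  have hz : act (altFactors (sigma 0) (sigma 1) [1, 1]) fixB = PA fixB := by
    rw [show ([1,1] : List ℕ) = 1 :: [1] from rfl, act_alt_cons, hinner, act_s0_pow, pow_one]
  have hoct_fixB : octF fixB.1.1.1 fixB.1.1.2 = 2 := by
    show octF 0 (-1) = 2
    exact octF2.mpr (by omega)
  have hoz : octF (PA fixB).1.1.1 (PA fixB).1.1.2 = 3 := tA2 hoct_fixB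
  have hkz : (PA fixB).2 = 0 := rfl
  -- w = act (alt [1,1]) (PA fixB) = PA (PB (PA fixB))
  have hw : act (altFactors (sigma 0) (sigma 1) [1, 1]) (PA fixB)
      = PA (PB (PA fixB)) := by
    rw [show ([1,1] : List ℕ) = 1 :: [1] from rfl, act_alt_cons, alt_single_act,
      act_s1_pow, act_s0_pow, pow_one, pow_one]
  have hob : octF (PB (PA fixB)).1.1.1 (PB (PA fixB)).1.1.2 = 4 := tB3 hoz
  have hkb : (PB (PA fixB)).2 = 0 := by
    rw [PB_k_ne7 (by omega), hkz]
  have hoa : octF (PA (PB (PA fixB))).1.1.1 (PA (PB (PA fixB))).1.1.2 = 4 ∨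
      octF (PA (PB (PA fixB))).1.1.1 (PA (PB (PA fixB))).1.1.2 = 5 := tA4 hob
  have hka : (PA (PB (PA fixB))).2 = 0 := hkb
  have hlam : lam (act ((Xbraid p [1, 1]) ^ 2) fixB) ≤ 5 + 4 * p := by
    rw [act_Xsq_even he, hz, hw, lam_Jp_zpow]
    have e2 : lam (PA (PB (PA fixB)))
        = 8 * (PA (PB (PA fixB))).2
          + octF (PA (PB (PA fixB))).1.1.1 (PA (PB (PA fixB))).1.1.2 := rfl
    rw [e2, hka]
    rcases hoa with h | h <;> rw [h] <;> omega
  have := lam_le_of_lle hlow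
  rw [lam_fixB] at this
  omega

end BrGeo


namespace BrGeo

lemma lam_Jp_pow (c : ℕ) (x : L) : lam ((Jp ^ c) x) = lam x + 4 * c := by
  rw [← zpow_natCast]
  exact lam_Jp_zpow c x

lemma main_lam_even (p : ℤ) (as : List ℕ) (hp : Even p) (hn : Even as.length)
    (h2 : ∀ a ∈ as, 2 ≤ a) (hne : 1 ≤ as.length) (m : ℕ) (hm : 1 ≤ m) :
    lam (act ((Xbraid p as) ^ (2 * m)) fixB)
      = 4 * (p + (as.length : ℤ)) * m - 1 := by
  rw [X_pow_decomp p as m hn hp, map_mul]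
  set Lm := List.flatten (List.replicate m (as ++ as)) with hLm
  have hlen : Lm.length = m * (2 * as.length) := by
    rw [hLm, length_join_replicate, List.length_append]
    ring
  have h2' : ∀ a ∈ Lm, 2 ≤ a := by
    intro a haa
    have := mem_join_replicate haa
    rw [List.mem_append] at this
    rcases this with h | h <;> exact h2 a h
  have hnil : Lm ≠ [] := by
    intro hc
    rw [hc] at hlen
    simp only [List.length_nil] at hlen
    rcases Nat.mul_eq_zero.mp hlen.symm with h | h <;> omega
  have heL : Even Lm.length := by
    rw [hlen]
    exact ⟨m * as.length, by ring⟩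
  have htraj := (trajB Lm h2' hnil).2 heL
  show lam ((act ((braidDelta ^ 2) ^ (p * m)))
      (act (altFactors (sigma 0) (sigma 1) Lm) fixB)) = _
  rw [act_C_zpow, lam_Jp_zpow, htraj, hlen]
  push_cast
  ring

lemma main_lam_odd (p : ℤ) (as : List ℕ) (hp : ¬ Even p) (hn : ¬ Even as.length)
    (h2 : ∀ a ∈ as, 2 ≤ a) (hne : 1 ≤ as.length) (m : ℕ) (hm : 1 ≤ m) :
    lam (act ((Xbraid p as) ^ (2 * m)) fixA)
      = 4 * (p + (as.length : ℤ)) * m - 3 := by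
  rw [X_pow_decomp_odd p as m hn hp, map_mul]
  set Lm := List.flatten (List.replicate m (as ++ as)) with hLm
  have hlen : Lm.length = m * (2 * as.length) := by
    rw [hLm, length_join_replicate, List.length_append]
    ring
  have h2' : ∀ a ∈ Lm, 2 ≤ a := by
    intro a haa
    have := mem_join_replicate haa
    rw [List.mem_append] at this
    rcases this with h | h <;> exact h2 a h
  have hnil : Lm ≠ [] := by
    intro hc
    rw [hc] at hlen
    simp only [List.length_nil] at hlen
    rcases Nat.mul_eq_zero.mp hlen.symm with h | h <;> omega
  have heL : Even Lm.length := by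
    rw [hlen]
    exact ⟨m * as.length, by ring⟩
  have htraj := (trajO Lm h2' hnil).2 heL
  show lam ((act ((braidDelta ^ 2) ^ (p * m)))
      (act (altFactors (sigma 1) (sigma 0) Lm) fixA)) = _
  rw [act_C_zpow, lam_Jp_zpow, htraj, hlen]
  push_cast
  ring

/-- the common core of the main (non-vacuous) case. -/
lemma main_case (p : ℤ) (as : List ℕ) (x0 : L) (c0 : ℤ)
    (hqp : Quasipositive (Xbraid p as))
    (hx0c : lam x0 + c0 = 3) (hc03 : 0 ≤ c0 ∧ c0 ≤ 3)
    (heval : ∀ m : ℕ, 1 ≤ m → lam (act ((Xbraid p as) ^ (2 * m)) x0)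
        = 4 * (p + (as.length : ℤ)) * m - c0) :
    0 < p + (as.length : ℤ) ∧
      p + (as.length : ℤ) < 2 * (3 * p + (as.sum : ℤ)) := by
  set X := Xbraid p as with hX
  set n : ℤ := (as.length : ℤ) with hn
  -- first inequality
  have hfirst : 0 < p + n := by
    have hlow := qp_sq_lower hqp x0
    have := lam_le_of_lle hlow
    rw [show (X ^ 2) = X ^ (2 * 1) from by norm_num, heval 1 (by norm_num)] at this
    omega
  refine ⟨hfirst, ?_⟩
  -- second inequality
  rcases Submonoid.exists_list_of_mem_closure hqp with ⟨l, hl, hprod⟩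
  have hl' : ∀ y ∈ l, y ∈ conjSet := hl
  have hk : 3 * p + (as.sum : ℤ) = l.length := by
    have h1 : eZ X = 3 * p + (as.sum : ℤ) := eZ_Xbraid p as
    have h2 : eZ X = l.length := by rw [← hprod]; exact eZ_list_prod l hl'
    omega
  rcases List.eq_nil_or_concat l with rfl | ⟨l1, h, rfl⟩
  · -- X = 1 is impossible
    exfalso
    have hX1 : X = 1 := by rw [← hprod]; rfl
    have := heval 1 (by norm_num)
    rw [show (2 * 1 : ℕ) = 2 from rfl, hX1] at this
    rw [show ((1:BraidGroup3) ^ 2) = 1 from by group, map_one] at this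
    have e : ((1 : Equiv.Perm L)) x0 = x0 := rfl
    rw [e] at this
    norm_num at this
    omega
  · have hh : h ∈ conjSet := hl' h (by simp)
    have hl1 : ∀ y ∈ l1, y ∈ conjSet := fun y hy => hl' y (by simp [hy])
    have hXdecomp : X = l1.prod * h := by
      rw [← hprod, List.concat_eq_append, List.prod_append, List.prod_cons, List.prod_nil,
        mul_one]
    obtain ⟨xs, hxs⟩ := qp_pow_bound hl1 hh hXdecomp
    set K : ℤ := (l1.length : ℤ) with hK
    have hkK : 3 * p + (as.sum : ℤ) = K + 1 := by
      rw [hk, List.concat_eq_append, List.length_append, List.length_singleton]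
      push_cast
      ring
    -- compare x0 with a shifted copy of xs
    set c : ℕ := (lam x0 - lam xs).toNat + 1 with hc
    have hcomp : lle x0 ((Jp ^ c) xs) := by
      apply Or.inl
      apply llt_of_lam_lt
      rw [lam_Jp_pow]
      have := Int.self_le_toNat (lam x0 - lam xs)
      omega
    by_contra hcon
    push_neg at hcon
    -- hcon : 2 * (3p + Σ) ≤ p + n
    set m : ℕ := (4 * c + lam xs + 4).toNat + 1 with hm
    have hm1 : 1 ≤ m := by omega
    have hchain : lam (act (X ^ (2 * m)) x0) ≤ lam xs + 4 * c + 8 * (m : ℤ) * K := by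
      have s1 : lle (act (X ^ (2 * m)) x0) (act (X ^ (2 * m)) ((Jp ^ c) xs)) :=
        act_mono_lle _ hcomp
      have s2 : act (X ^ (2 * m)) ((Jp ^ c) xs) = (Jp ^ c) (act (X ^ (2 * m)) xs) :=
        act_Jp_pow_comm _ _ _
      have s3 : lle ((Jp ^ c) (act (X ^ (2 * m)) xs))
          ((Jp ^ c) ((Jp ^ (2 * m * l1.length)) xs)) :=
        Jp_pow_mono_lle _ (hxs (2 * m))
      have s4 := lam_le_of_lle (lle_trans s1 (by rw [s2]; exact s3))
      rw [lam_Jp_pow, lam_Jp_pow] at s4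
      have : (((2 * m * l1.length : ℕ)) : ℤ) = 2 * (m : ℤ) * K := by
        push_cast
        ring
      have e48 : (8:ℤ) * (m:ℤ) * K = 4 * (2 * (m:ℤ) * K) := by ring
      omega
    rw [heval m hm1] at hchain
    -- 4 (p+n) m - c0 ≤ lam xs + 4c + 8 m K, with p + n ≥ 2(K+1)
    have hpn : p + n ≥ 2 * K + 2 := by omega
    have hgrow : 4 * (p + n) * (m:ℤ) ≥ 8 * (m:ℤ) * K + 8 * (m:ℤ) := by nlinarith [Int.ofNat_nonneg m]
    have hmbig : (m : ℤ) ≥ 4 * c + lam xs + 5 := by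
      have := Int.self_le_toNat (4 * (c:ℤ) + lam xs + 4)
      omega
    omega

end BrGeo



/-- **Proposition 6.5(b)** (Orevkov): if `(p, a⃗)` is reduced (i.e. `n ≤ 1`, or
`a⃗ = (1,1)` with `p` even, or `n ≡ p (mod 2)` with all `a_i ≥ 2`), `p < 0`, and
`X(p, a⃗)` is quasipositive, then `0 < p + n < 2·e(X(p, a⃗))`, where
`e(X(p, a⃗)) = 3p + a₁ + ⋯ + a_n`. -/
theorem statement17 (p : ℤ) (as : List ℕ) (hpos : ∀ a ∈ as, 0 < a)
    (hred : as.length ≤ 1 ∨ (as = [1, 1] ∧ Even p) ∨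
      ((as.length : ℤ) % 2 = p % 2 ∧ ∀ a ∈ as, 2 ≤ a))
    (hp : p < 0) (hqp : Quasipositive (Xbraid p as)) :
    0 < p + (as.length : ℤ) ∧
      p + (as.length : ℤ) < 2 * (3 * p + (as.sum : ℤ)) := by
  rcases hred with h1 | ⟨has, hpe⟩ | ⟨hpar, h2⟩
  · rcases as with _ | ⟨a, _ | ⟨b, t⟩⟩
    · exact (BrGeo.vac_nil hp hqp).elim
    · exact (BrGeo.vac_single hp (hpos a (by simp)) hqp).elim
    · simp at h1
  · subst has
    exact (BrGeo.vac_pair hp hpe hqp).elim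
  · by_cases hn0 : as.length = 0
    · rw [List.length_eq_zero_iff] at hn0
      subst hn0
      exact (BrGeo.vac_nil hp hqp).elim
    · by_cases hn1 : as.length = 1
      · rw [List.length_eq_one_iff] at hn1
        obtain ⟨a, rfl⟩ := hn1
        exact (BrGeo.vac_single hp (by have := h2 a (by simp); omega) hqp).elim
      · by_cases hpe : Even p
        · have hne : Even as.length := by
            rw [Int.even_iff] at hpe
            rw [Nat.even_iff]
            omega
          refine BrGeo.main_case p as BrGeo.fixB 1 hqp (by rw [BrGeo.lam_fixB]; norm_num)
            ⟨by norm_num, by norm_num⟩ ?_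
          intro m hm
          rw [BrGeo.main_lam_even p as hpe hne h2 (by omega) m hm]
        · have hne : ¬ Even as.length := by
            rw [Int.even_iff] at hpe
            rw [Nat.even_iff]
            omega
          refine BrGeo.main_case p as BrGeo.fixA 3 hqp (by rw [BrGeo.lam_fixA]; norm_num)
            ⟨by norm_num, by norm_num⟩ ?_
          intro m hm
          rw [BrGeo.main_lam_odd p as hpe hne h2 (by omega) m hm]
end

section
/- Let (G,P,δ) be a square free symmetric homogeneous Garside structure of finite type. Let k ≥ 1, let A be a simple element with A ≠ 1 and A ≠ δ, let B = ∂A (so AB = δ), and let x be an atom such that the product A·x^k·B (with x^k standing for k factors x) is in left normal form. Set X = A x^k B, and let Y ∈ G with inf Y = 0. Then either δ ≼ XY, or the initial factor of the left normal form of XY equals A, i.e. ι(XY) = A. -/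
/-- A Garside structure `(G, P, Δ)` on a group `G`: `P` is the submonoid of positive
elements, `Δ` the Garside element.  The axioms (G1)-(G4) are stated below:
the prefix relation `a ≼ b ⟺ a⁻¹b ∈ P` is a lattice order (with gcd `wedge` and
lcm `vee`), the simple elements `[1,Δ]` generate `G`, conjugation by `Δ` preserves `P`,
and every nontrivial positive element has finite letter length. -/
structure GarsideStructure (G : Type*) [Group G] where
  P : Set G
  one_mem : (1 : G) ∈ P
  mul_mem : ∀ {a b : G}, a ∈ P → b ∈ P → a * b ∈ P
  inter_inv : ∀ a : G, a ∈ P → a⁻¹ ∈ P → a = 1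
  Δ : G
  Δ_mem : Δ ∈ P
  wedge : G → G → G
  vee : G → G → G
  wedge_le_left : ∀ a b : G, (wedge a b)⁻¹ * a ∈ P
  wedge_le_right : ∀ a b : G, (wedge a b)⁻¹ * b ∈ P
  le_wedge : ∀ a b c : G, c⁻¹ * a ∈ P → c⁻¹ * b ∈ P → c⁻¹ * wedge a b ∈ P
  le_vee_left : ∀ a b : G, a⁻¹ * vee a b ∈ P
  le_vee_right : ∀ a b : G, b⁻¹ * vee a b ∈ P
  vee_le : ∀ a b c : G, a⁻¹ * c ∈ P → b⁻¹ * c ∈ P → (vee a b)⁻¹ * c ∈ P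
  simples_generate : Subgroup.closure {a : G | a ∈ P ∧ a⁻¹ * Δ ∈ P} = ⊤
  conj_mem : ∀ a : G, a ∈ P → Δ⁻¹ * a * Δ ∈ P
  len_bdd : ∀ X : G, X ∈ P → X ≠ 1 →
    BddAbove {k : ℕ | ∃ w : List G, w.length = k ∧ (∀ a ∈ w, a ∈ P ∧ a ≠ 1) ∧ w.prod = X}

namespace GarsideStructure

variable {G : Type*} [Group G] (S : GarsideStructure G)

/-- The prefix order `a ≼ b`. -/
def le (a b : G) : Prop := a⁻¹ * b ∈ S.P

/-- Strict prefix order `a ≺ b`. -/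
def lt (a b : G) : Prop := S.le a b ∧ a ≠ b

/-- The suffix relation `a ≽ b ⟺ ab⁻¹ ∈ P`. -/
def ges (a b : G) : Prop := a * b⁻¹ ∈ S.P

/-- Simple elements: the interval `[1, Δ]`. -/
def IsSimple (a : G) : Prop := a ∈ S.P ∧ S.le a S.Δ

/-- Atoms: elements of `P \ {1}` that are not products of two elements of `P \ {1}`. -/
def IsAtom' (a : G) : Prop := a ∈ S.P ∧ a ≠ 1 ∧
  ¬ ∃ b c : G, b ∈ S.P ∧ b ≠ 1 ∧ c ∈ S.P ∧ c ≠ 1 ∧ a = b * c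

/-- The letter length `‖X‖` of a positive element. -/
noncomputable def norm (X : G) : ℕ :=
  sSup {k : ℕ | ∃ w : List G, w.length = k ∧ (∀ a ∈ w, a ∈ S.P ∧ a ≠ 1) ∧ w.prod = X}

/-- Finite type: finitely many simple elements. -/
def FiniteType : Prop := {a : G | S.IsSimple a}.Finite

/-- Homogeneous: the letter length is additive on `P`. -/
def Homogeneous : Prop := ∀ X ∈ S.P, ∀ Y ∈ S.P, S.norm (X * Y) = S.norm X + S.norm Y

/-- Symmetric: for simple `u, v`, `u ≼ v ⟺ v ≽ u`. -/
def IsSymmetric : Prop := ∀ u v : G, S.IsSimple u → S.IsSimple v → (S.le u v ↔ S.ges v u)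

/-- Square free: no simple element contains the square of an atom. -/
def SquareFree : Prop := ∀ a : G, S.IsSimple a →
  ¬ ∃ U x V : G, U ∈ S.P ∧ S.IsAtom' x ∧ V ∈ S.P ∧ a = U * x ^ 2 * V

/-- The right complement `∂A = A⁻¹Δ`. -/
def dl (A : G) : G := A⁻¹ * S.Δ

/-- `τ(X) = Δ⁻¹XΔ`. -/
def tau (X : G) : G := S.Δ⁻¹ * X * S.Δ

/-- The product `A·B` of simple elements is left weighted if `A = (AB) ∧ Δ`. -/
def LeftWeighted (A B : G) : Prop := A = S.wedge (A * B) S.Δ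

/-- The gcd for the suffix order `≽` (derived from the lcm for `≼`). -/
def rwedge (a b : G) : G := (S.vee a⁻¹ b⁻¹)⁻¹

/-- The product `A·B` of simple elements is right weighted if `B = (AB) ∧̃ Δ`. -/
def RightWeighted (A B : G) : Prop := B = S.rwedge (A * B) S.Δ

end GarsideStructure
/-- A Garside structure together with the (unique) left normal form of each element:
`X = Δ^(nfInf X) · (nfWord X)`, where the factors of `nfWord X` are simple elements
different from `1` and `Δ` and each consecutive pair is left weighted. -/
structure GarsideStructureNF (G : Type*) [Group G] extends GarsideStructure G where
  nfInf : G → ℤ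
  nfWord : G → List G
  nf_factors : ∀ X : G, ∀ a ∈ nfWord X,
    toGarsideStructure.IsSimple a ∧ a ≠ 1 ∧ a ≠ Δ
  nf_chain : ∀ X : G, List.Chain' toGarsideStructure.LeftWeighted (nfWord X)
  nf_prod : ∀ X : G, X = Δ ^ nfInf X * (nfWord X).prod
  nf_unique : ∀ (X : G) (p : ℤ) (w : List G),
    (∀ a ∈ w, toGarsideStructure.IsSimple a ∧ a ≠ 1 ∧ a ≠ Δ) →
    List.Chain' toGarsideStructure.LeftWeighted w →
    X = Δ ^ p * w.prod → p = nfInf X ∧ w = nfWord X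

namespace GarsideStructureNF

variable {G : Type*} [Group G] (S : GarsideStructureNF G)

/-- The infimum `inf X` of `X`: the power of `Δ` in the left normal form. -/
def inf (X : G) : ℤ := S.nfInf X

/-- The canonical length `ℓ(X)`. -/
def ell (X : G) : ℕ := (S.nfWord X).length

/-- The initial factor `ι(X) = τ^{-p}(A₁)`. -/
def iota (X : G) : G := S.Δ ^ S.nfInf X * (S.nfWord X).headD 1 * S.Δ ^ (-S.nfInf X)

/-- The final factor `φ(X) = A_r`. -/
def phi (X : G) : G := (S.nfWord X).getLastD 1

/-- The preferred prefix `𝔭(X) = ι(X) ∧ ∂(φ(X))`. -/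
def pp (X : G) : G := S.wedge (S.iota X) ((S.phi X)⁻¹ * S.Δ)

/-- Cyclic sliding `𝔰(X) = 𝔭(X)⁻¹ X 𝔭(X)` (and `𝔰(X) = X` when `ℓ(X) = 0`). -/
def sliding (X : G) : G := if S.ell X = 0 then X else (S.pp X)⁻¹ * X * S.pp X

/-- Cycling `c(X) = ι(X)⁻¹ X ι(X)` (and `c(X) = X` when `ℓ(X) = 0`). -/
def cycling (X : G) : G := if S.ell X = 0 then X else (S.iota X)⁻¹ * X * S.iota X

/-- Decycling `d(X) = φ(X) X φ(X)⁻¹` (and `d(X) = X` when `ℓ(X) = 0`). -/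
def decycling (X : G) : G := if S.ell X = 0 then X else S.phi X * X * (S.phi X)⁻¹

/-- The set of sliding circuits `SC(X) = {Y ∈ X^G | 𝔰^m(Y) = Y for some m > 0}`. -/
def SC (X : G) : Set G := {Y : G | IsConj X Y ∧ ∃ m : ℕ, 0 < m ∧ S.sliding^[m] Y = Y}

/-- `s` is an SC-minimal conjugator for `X`. -/
def SCMinConj (X s : G) : Prop :=
  s ∈ S.P ∧ s ≠ 1 ∧ s⁻¹ * X * s ∈ S.SC X ∧
  ∀ t : G, S.lt 1 t → S.lt t s → t⁻¹ * X * t ∉ S.SC X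

/-- The summit infimum `inf_s X = max {inf Y | Y ∈ X^G}`. -/
noncomputable def infS (X : G) : ℤ := sSup {p : ℤ | ∃ Y : G, IsConj X Y ∧ p = S.nfInf Y}

/-- The summit length `ℓ_s(X) = min {ℓ(Y) | Y ∈ X^G}`. -/
noncomputable def ellS (X : G) : ℕ := sInf {r : ℕ | ∃ Y : G, IsConj X Y ∧ r = S.ell Y}

end GarsideStructureNF
section AuxLemmas

namespace GarsideStructure

variable {G : Type*} [Group G] (S : GarsideStructure G)

lemma aux_le_refl (a : G) : S.le a a := by
  unfold GarsideStructure.le; rw [inv_mul_cancel]; exact S.one_mem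

lemma aux_le_trans {a b c : G} (h1 : S.le a b) (h2 : S.le b c) : S.le a c := by
  unfold GarsideStructure.le at *
  have := S.mul_mem h1 h2
  rwa [show a⁻¹*b*(b⁻¹*c) = a⁻¹*c by group] at this

lemma aux_le_antisymm {a b : G} (h1 : S.le a b) (h2 : S.le b a) : a = b := by
  unfold GarsideStructure.le at *
  have h3 : (a⁻¹*b)⁻¹ ∈ S.P := by rwa [show (a⁻¹*b)⁻¹ = b⁻¹*a by group]
  have := S.inter_inv _ h1 h3
  have : b = a * 1 := by rw [← this]; group
  simp at this; exact this.symm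

lemma aux_le_cancel {a b : G} (c : G) : S.le (c*a) (c*b) ↔ S.le a b := by
  unfold GarsideStructure.le
  rw [show (c*a)⁻¹*(c*b) = a⁻¹*b by group]

lemma aux_le_mul_right {a b : G} (hb : b ∈ S.P) : S.le a (a*b) := by
  unfold GarsideStructure.le; rwa [show a⁻¹*(a*b) = b by group]

lemma aux_mem_of_le {a b : G} (ha : a ∈ S.P) (h : S.le a b) : b ∈ S.P := by
  have := S.mul_mem ha h
  rwa [show a*(a⁻¹*b) = b by group] at this

lemma aux_one_le {a : G} (ha : a ∈ S.P) : S.le 1 a := by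
  unfold GarsideStructure.le; rwa [inv_one, one_mul]

lemma aux_eq_one_of_le_one {a : G} (ha : a ∈ S.P) (h : S.le a 1) : a = 1 := by
  unfold GarsideStructure.le at h
  rw [mul_one] at h
  exact S.inter_inv a ha h

lemma aux_wedge_le_left' (a b : G) : S.le (S.wedge a b) a := S.wedge_le_left a b
lemma aux_wedge_le_right' (a b : G) : S.le (S.wedge a b) b := S.wedge_le_right a b
lemma aux_le_wedge' {a b c : G} (h1 : S.le c a) (h2 : S.le c b) : S.le c (S.wedge a b) :=
  S.le_wedge a b c h1 h2
lemma aux_le_vee_left' (a b : G) : S.le a (S.vee a b) := S.le_vee_left a b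
lemma aux_le_vee_right' (a b : G) : S.le b (S.vee a b) := S.le_vee_right a b
lemma aux_vee_le' {a b c : G} (h1 : S.le a c) (h2 : S.le b c) : S.le (S.vee a b) c :=
  S.vee_le a b c h1 h2

lemma aux_wedge_mem {a b : G} (ha : a ∈ S.P) (hb : b ∈ S.P) : S.wedge a b ∈ S.P := by
  have := S.aux_le_wedge' (a := a) (b := b) (S.aux_one_le ha) (S.aux_one_le hb)
  unfold GarsideStructure.le at this
  rwa [inv_one, one_mul] at this

lemma aux_vee_mem {a b : G} (ha : a ∈ S.P) : S.vee a b ∈ S.P :=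
  S.aux_mem_of_le ha (S.aux_le_vee_left' a b)

lemma aux_delta_simple : S.IsSimple S.Δ := ⟨S.Δ_mem, S.aux_le_refl _⟩

lemma aux_simple_of_le {a b : G} (ha : a ∈ S.P) (hb : S.IsSimple b) (h : S.le a b) :
    S.IsSimple a := ⟨ha, S.aux_le_trans h hb.2⟩

lemma aux_dl_mem {a : G} (ha : S.IsSimple a) : a⁻¹ * S.Δ ∈ S.P := ha.2

lemma aux_dl_le_delta {a : G} (ha : S.IsSimple a) : S.le (a⁻¹ * S.Δ) S.Δ := by
  unfold GarsideStructure.le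
  have := S.conj_mem a ha.1
  rwa [show (a⁻¹*S.Δ)⁻¹ * S.Δ = S.Δ⁻¹*a*S.Δ by group]

lemma aux_dl_simple {a : G} (ha : S.IsSimple a) : S.IsSimple (a⁻¹ * S.Δ) :=
  ⟨ha.2, S.aux_dl_le_delta ha⟩

lemma aux_prod_mem {l : List G} (h : ∀ a ∈ l, a ∈ S.P) : l.prod ∈ S.P := by
  induction l with
  | nil => simpa using S.one_mem
  | cons a t ih =>
    rw [List.prod_cons]
    exact S.mul_mem (h a (by simp)) (ih (fun b hb => h b (by simp [hb])))

lemma aux_mul_ne_one {u v : G} (hu : u ∈ S.P) (hu1 : u ≠ 1) (hv : v ∈ S.P) : u * v ≠ 1 := by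
  intro h
  have : u⁻¹ = v := inv_eq_of_mul_eq_one_right h
  exact hu1 (S.inter_inv u hu (this ▸ hv))

lemma aux_prod_ne_one {l : List G} (hl : l ≠ []) (h : ∀ a ∈ l, a ∈ S.P ∧ a ≠ 1) :
    l.prod ≠ 1 := by
  cases l with
  | nil => exact absurd rfl hl
  | cons a t =>
    rw [List.prod_cons]
    exact S.aux_mul_ne_one (h a (by simp)).1 (h a (by simp)).2
      (S.aux_prod_mem (fun b hb => (h b (by simp [hb])).1))

lemma aux_norm_ge_one {X : G} (hX : X ∈ S.P) (hX1 : X ≠ 1) : 1 ≤ S.norm X :=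
  le_csSup (S.len_bdd X hX hX1) ⟨[X], by simp, by simp [hX, hX1], by simp⟩

lemma aux_eq_one_of_norm_eq_zero {X : G} (hX : X ∈ S.P) (h : S.norm X = 0) : X = 1 := by
  by_contra h1
  have := S.aux_norm_ge_one hX h1
  omega

lemma aux_norm_atom {x : G} (hx : S.IsAtom' x) : S.norm x = 1 := by
  refine le_antisymm ?_ (S.aux_norm_ge_one hx.1 hx.2.1)
  have hne : (1:ℕ) ∈ {k : ℕ | ∃ w : List G, w.length = k ∧ (∀ a ∈ w, a ∈ S.P ∧ a ≠ 1) ∧ w.prod = x} :=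
    ⟨[x], by simp, by simp [hx.1, hx.2.1], by simp⟩
  apply csSup_le ⟨1, hne⟩
  rintro k ⟨w, hlen, hfac, hprod⟩
  match w, hlen with
  | [], hlen => simp at hlen; omega
  | [a], hlen => simp at hlen; omega
  | (a :: b :: t), hlen =>
    exfalso
    apply hx.2.2
    refine ⟨a, (b :: t).prod, (hfac a (by simp)).1, (hfac a (by simp)).2,
      S.aux_prod_mem (fun c hc => (hfac c (by simp [hc])).1),
      S.aux_prod_ne_one (by simp) (fun c hc => hfac c (by simp [hc])), ?_⟩
    rw [← hprod, List.prod_cons]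

lemma aux_atom_le_cases {x a : G} (hx : S.IsAtom' x) (ha : a ∈ S.P) (h : S.le a x) :
    a = 1 ∨ a = x := by
  by_cases h1 : a = 1
  · exact Or.inl h1
  by_cases h2 : a⁻¹ * x = 1
  · right
    have : x = a * 1 := by rw [← h2]; group
    simpa using this.symm
  · exfalso
    exact hx.2.2 ⟨a, a⁻¹*x, ha, h1, h, h2, by group⟩

lemma aux_pow_mem {a : G} (ha : a ∈ S.P) (n : ℕ) : a ^ n ∈ S.P := by
  induction n with
  | zero => simpa using S.one_mem
  | succ m ih => rw [pow_succ]; exact S.mul_mem ih ha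

lemma aux_zpow_mem {a : G} (ha : a ∈ S.P) {n : ℤ} (hn : 0 ≤ n) : a ^ n ∈ S.P := by
  obtain ⟨m, rfl⟩ := Int.eq_ofNat_of_zero_le hn
  rw [zpow_natCast]
  exact S.aux_pow_mem ha m

/-- consequence of left-weightedness: `w ∧ ∂u = 1`. -/
lemma aux_lw_wedge {u w : G} (hu : S.IsSimple u) (hw : w ∈ S.P)
    (hlw : S.LeftWeighted u w) : S.wedge w (u⁻¹ * S.Δ) = 1 := by
  set z := S.wedge w (u⁻¹ * S.Δ) with hz
  have hzP : z ∈ S.P := S.aux_wedge_mem hw hu.2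
  have h1 : S.le (u*z) (u*w) := (S.aux_le_cancel u).2 (S.aux_wedge_le_left' _ _)
  have h2 : S.le (u*z) S.Δ := by
    have := S.aux_wedge_le_right' w (u⁻¹ * S.Δ)
    unfold GarsideStructure.le at this ⊢
    rwa [show (u*z)⁻¹ * S.Δ = z⁻¹ * (u⁻¹ * S.Δ) by group]
  have h3 : S.le (u*z) u := by
    have := S.aux_le_wedge' h1 h2
    rwa [← hlw] at this
  have h4 : S.le z 1 := by
    unfold GarsideStructure.le at h3 ⊢
    rwa [show (u*z)⁻¹ * u = z⁻¹ * 1 by group] at h3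
  exact S.aux_eq_one_of_le_one hzP h4

end GarsideStructure

end AuxLemmas

section HeartLemma

namespace GarsideStructure

variable {G : Type*} [Group G] (S : GarsideStructure G)

/-- The key lemma: if a nontrivial `g ≼ B` divides `x^k (B Y)`, then `B` divides it. -/
lemma aux_heart (hsym : S.IsSymmetric) (hhom : S.Homogeneous) (hsf : S.SquareFree)
    (x B : G) (hx : S.IsAtom' x) (hxs : S.IsSimple x) (hBs : S.IsSimple B)
    (hxB : S.wedge x B = 1) (hBdx : S.wedge B (x⁻¹ * S.Δ) = 1)
    (k : ℕ) (hk : 1 ≤ k) (Y : G) (hY : Y ∈ S.P)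
    (g : G) (hg : g ∈ S.P) (hgne : g ≠ 1) (hgB : S.le g B)
    (hgW : S.le g (x^k * (B*Y))) :
    S.le B (x^k * (B*Y)) := by
  have hxne : x ≠ 1 := hx.2.1
  have hgs : S.IsSimple g := S.aux_simple_of_le hg hBs hgB
  -- v = B ∨ x and its pieces
  set v := S.vee B x with hv
  have hBv : S.le B v := S.aux_le_vee_left' B x
  have hxv : S.le x v := S.aux_le_vee_right' B x
  have hvP : v ∈ S.P := S.aux_vee_mem hBs.1
  have hvs : S.IsSimple v := ⟨hvP, S.aux_vee_le' hBs.2 hxs.2⟩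
  set Bt := x⁻¹ * v with hBt
  have hBtP : Bt ∈ S.P := hxv
  have hvxBt : v = x * Bt := by rw [hBt]; group
  have hBtdx : S.le Bt (x⁻¹ * S.Δ) := by
    unfold GarsideStructure.le
    have := hvs.2
    unfold GarsideStructure.le at this
    rwa [show Bt⁻¹ * (x⁻¹ * S.Δ) = v⁻¹ * S.Δ by rw [hBt]; group]
  have hBts : S.IsSimple Bt := ⟨hBtP, S.aux_le_trans hBtdx (S.aux_dl_le_delta hxs)⟩
  set x₁ := B⁻¹ * v with hx₁
  have hx₁P : x₁ ∈ S.P := hBv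
  have hvBx₁ : v = B * x₁ := by rw [hx₁]; group
  -- Bt ≼ v  (by symmetry, since v = x·Bt)
  have hBtv : S.le Bt v := by
    apply (hsym Bt v hBts hvs).2
    unfold GarsideStructure.ges
    rw [show v * Bt⁻¹ = x from by rw [hvxBt]; group]
    exact hxs.1
  -- g₁ = x⁻¹(x ∨ g)
  set g₁ := x⁻¹ * (S.vee x g) with hg₁
  have hg₁P : g₁ ∈ S.P := S.aux_le_vee_left' x g
  have hxg1 : x * g₁ = S.vee x g := by rw [hg₁]; group
  have hveexg_s : S.IsSimple (S.vee x g) :=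
    ⟨S.aux_vee_mem hxs.1, S.aux_vee_le' hxs.2 hgs.2⟩
  have hg₁dx : S.le g₁ (x⁻¹ * S.Δ) := by
    unfold GarsideStructure.le
    have := hveexg_s.2
    unfold GarsideStructure.le at this
    rwa [show g₁⁻¹ * (x⁻¹ * S.Δ) = (S.vee x g)⁻¹ * S.Δ from by rw [hg₁]; group]
  have hg₁s : S.IsSimple g₁ := ⟨hg₁P, S.aux_le_trans hg₁dx (S.aux_dl_le_delta hxs)⟩
  -- x ∧ g = 1
  have hxg_wedge : S.wedge x g = 1 := by
    apply S.aux_eq_one_of_le_one (S.aux_wedge_mem hxs.1 hg)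
    rw [← hxB]
    exact S.aux_le_wedge' (S.aux_wedge_le_left' x g)
      (S.aux_le_trans (S.aux_wedge_le_right' x g) hgB)
  -- g₁ ≠ 1
  have hg₁ne : g₁ ≠ 1 := by
    intro h
    apply hgne
    apply S.aux_eq_one_of_le_one hg
    rw [← hxg_wedge]
    refine S.aux_le_wedge' ?_ (S.aux_le_refl g)
    have : S.le g (S.vee x g) := S.aux_le_vee_right' x g
    rwa [← hxg1, h, mul_one] at this
  -- x ∧ g₁ = 1  (via square-freeness)
  have hxg₁_wedge : S.wedge x g₁ = 1 := by
    rcases S.aux_atom_le_cases hx (S.aux_wedge_mem hxs.1 hg₁P)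
      (S.aux_wedge_le_left' x g₁) with h | h
    · exact h
    · exfalso
      have hxleg₁ : S.le x g₁ := h ▸ S.aux_wedge_le_right' x g₁
      exact hsf (S.vee x g) hveexg_s
        ⟨1, x, x⁻¹ * g₁, S.one_mem, hx, hxleg₁, by rw [← hxg1]; group⟩
  -- g₁ ≼ Bt
  have hg₁Bt : S.le g₁ Bt := by
    have h1 : S.le (S.vee x g) v := S.aux_vee_le' hxv (S.aux_le_trans hgB hBv)
    rw [← hxg1, hvxBt] at h1
    exact (S.aux_le_cancel x).1 h1
  -- g₁ ≼ x*g₁ by symmetry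
  have hg₁_le_xg₁ : S.le g₁ (x * g₁) := by
    apply (hsym g₁ (x*g₁) hg₁s (hxg1 ▸ hveexg_s)).2
    unfold GarsideStructure.ges
    rw [show x * g₁ * g₁⁻¹ = x by group]
    exact hxs.1
  -- x ≼ x*g₁
  have hx_le_xg₁ : S.le x (x * g₁) := S.aux_le_mul_right hg₁P
  -- FIX : vee x g₁ = x * g₁
  have hFIX : S.vee x g₁ = x * g₁ := by
    have hle : S.le (S.vee x g₁) (x * g₁) := S.aux_vee_le' hx_le_xg₁ hg₁_le_xg₁
    have hvee_s : S.IsSimple (S.vee x g₁) :=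
      S.aux_simple_of_le (S.aux_vee_mem hxs.1) (hxg1 ▸ hveexg_s) hle
    set h := x⁻¹ * (S.vee x g₁) with hh
    have hhP : h ∈ S.P := S.aux_le_vee_left' x g₁
    have hxh : x * h = S.vee x g₁ := by rw [hh]; group
    have hhg₁ : S.le h g₁ := by
      have := hle
      rw [← hxh] at this
      exact (S.aux_le_cancel x).1 this
    set e := (S.vee x g₁) * g₁⁻¹ with he
    have heP : e ∈ S.P := by
      have := (hsym g₁ (S.vee x g₁) hg₁s hvee_s).1 (S.aux_le_vee_right' x g₁)
      exact this
    have heg₁ : e * g₁ = S.vee x g₁ := by rw [he]; group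
    have hene : e ≠ 1 := by
      intro h0
      rw [h0, one_mul] at heg₁
      have : S.le x g₁ := heg₁ ▸ S.aux_le_vee_left' x g₁
      have hx1 : S.le x 1 := by
        rw [← hxg₁_wedge]
        exact S.aux_le_wedge' (S.aux_le_refl x) this
      exact hxne (S.aux_eq_one_of_le_one hxs.1 hx1)
    set c := h⁻¹ * g₁ with hc
    have hcP : c ∈ S.P := hhg₁
    have hhc : h * c = g₁ := by rw [hc]; group
    -- norms
    have n1 : S.norm (S.vee x g₁) = 1 + S.norm h := by
      rw [← hxh, hhom x hxs.1 h hhP, S.aux_norm_atom hx]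
    have n2 : S.norm (S.vee x g₁) = S.norm e + S.norm g₁ := by
      rw [← heg₁, hhom e heP g₁ hg₁P]
    have n3 : S.norm g₁ = S.norm h + S.norm c := by
      rw [← hhc, hhom h hhP c hcP]
    have n4 : 1 ≤ S.norm e := S.aux_norm_ge_one heP hene
    have hc0 : S.norm c = 0 := by omega
    have : c = 1 := S.aux_eq_one_of_norm_eq_zero hcP hc0
    rw [this, mul_one] at hhc
    rw [← hxh, hhc]
  -- d := g ∨ g₁ ; key: x ≼ d
  set d := S.vee g g₁ with hd
  have hdP : d ∈ S.P := S.aux_vee_mem hg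
  have hds : S.IsSimple d := ⟨hdP, S.aux_vee_le' hgs.2 hg₁s.2⟩
  have hg_le_d : S.le g d := S.aux_le_vee_left' g g₁
  have hg₁_le_d : S.le g₁ d := S.aux_le_vee_right' g g₁
  have hxd : S.vee x d = x * g₁ := by
    apply S.aux_le_antisymm
    · apply S.aux_vee_le' hx_le_xg₁
      refine S.aux_vee_le' ?_ hg₁_le_xg₁
      rw [hxg1]; exact S.aux_le_vee_right' x g
    · rw [hxg1]
      exact S.aux_vee_le' (S.aux_le_vee_left' x d)
        (S.aux_le_trans hg_le_d (S.aux_le_vee_right' x d))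
  have hx_le_d : S.le x d := by
    by_contra hcon
    set e' := (S.vee x d) * d⁻¹ with he'
    have hxd_s : S.IsSimple (S.vee x d) := hxd ▸ (hxg1 ▸ hveexg_s)
    have he'P : e' ∈ S.P := (hsym d (S.vee x d) hds hxd_s).1 (S.aux_le_vee_right' x d)
    have he'd : e' * d = S.vee x d := by rw [he']; group
    have he'ne : e' ≠ 1 := by
      intro h0
      rw [h0, one_mul] at he'd
      exact hcon (he'd ▸ S.aux_le_vee_left' x d)
    set c' := g₁⁻¹ * d with hc'
    have hc'P : c' ∈ S.P := hg₁_le_d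
    have hg₁c' : g₁ * c' = d := by rw [hc']; group
    have n1 : S.norm (S.vee x d) = 1 + S.norm g₁ := by
      rw [hxd, hhom x hxs.1 g₁ hg₁P, S.aux_norm_atom hx]
    have n2 : S.norm (S.vee x d) = S.norm e' + S.norm d := by
      rw [← he'd, hhom e' he'P d hdP]
    have n3 : S.norm d = S.norm g₁ + S.norm c' := by
      rw [← hg₁c', hhom g₁ hg₁P c' hc'P]
    have n4 : 1 ≤ S.norm e' := S.aux_norm_ge_one he'P he'ne
    have hc0 : S.norm c' = 0 := by omega
    have hc1 : c' = 1 := S.aux_eq_one_of_norm_eq_zero hc'P hc0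
    rw [hc1, mul_one] at hg₁c'
    -- d = g₁, so g ≼ g₁ ≼ Bt ≼ ∂x, contradicting g ≼ B and B ∧ ∂x = 1
    have hgg₁ : S.le g g₁ := hg₁c' ▸ hg_le_d
    have hgdx : S.le g (x⁻¹ * S.Δ) :=
      S.aux_le_trans (S.aux_le_trans hgg₁ hg₁Bt) hBtdx
    have : S.le g 1 := by
      rw [← hBdx]
      exact S.aux_le_wedge' hgB hgdx
    exact hgne (S.aux_eq_one_of_le_one hg this)
  -- iteration: g₁ ≼ B * Y
  have hstep : ∀ j : ℕ, S.le g₁ (x^(j+1) * (B*Y)) → S.le g₁ (x^j * (B*Y)) := by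
    intro j hj
    have hx_le : S.le x (x^(j+1) * (B*Y)) := by
      unfold GarsideStructure.le
      rw [show x⁻¹ * (x^(j+1) * (B*Y)) = x^j * (B*Y) from by rw [pow_succ']; group]
      exact S.mul_mem (S.aux_pow_mem hxs.1 j) (S.mul_mem hBs.1 hY)
    have : S.le (S.vee x g₁) (x^(j+1) * (B*Y)) := S.aux_vee_le' hx_le hj
    rw [hFIX] at this
    rw [show x^(j+1) * (B*Y) = x * (x^j * (B*Y)) from by rw [pow_succ']; group] at this
    exact (S.aux_le_cancel x).1 this
  have hdown : ∀ j : ℕ, S.le g₁ (x^j * (B*Y)) → S.le g₁ (B*Y) := by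
    intro j
    induction j with
    | zero => intro hj; rwa [pow_zero, one_mul] at hj
    | succ m ih => intro hj; exact ih (hstep m hj)
  have hg₁BY : S.le g₁ (B * Y) := by
    obtain ⟨k', rfl⟩ : ∃ k', k = k' + 1 := ⟨k - 1, (Nat.succ_pred_eq_of_pos hk).symm⟩
    apply hdown k'
    have hx_le : S.le x (x^(k'+1) * (B*Y)) := by
      unfold GarsideStructure.le
      rw [show x⁻¹ * (x^(k'+1) * (B*Y)) = x^k' * (B*Y) from by rw [pow_succ']; group]
      exact S.mul_mem (S.aux_pow_mem hxs.1 k') (S.mul_mem hBs.1 hY)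
    have h1 : S.le (S.vee x g) (x^(k'+1) * (B*Y)) := S.aux_vee_le' hx_le hgW
    rw [← hxg1, show x^(k'+1) * (B*Y) = x * (x^k' * (B*Y)) from by rw [pow_succ']; group] at h1
    exact (S.aux_le_cancel x).1 h1
  -- junction: x₁ ≼ Y
  have hx₁Y : S.le x₁ Y := by
    have hBBY : S.le B (B*Y) := S.aux_le_mul_right hY
    have hu : S.le (S.vee B g₁) (B*Y) := S.aux_vee_le' hBBY hg₁BY
    have hxu : S.le x (S.vee B g₁) :=
      S.aux_le_trans hx_le_d
        (S.aux_vee_le' (S.aux_le_trans hgB (S.aux_le_vee_left' B g₁))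
          (S.aux_le_vee_right' B g₁))
    have hvu : S.le v (S.vee B g₁) := S.aux_vee_le' (S.aux_le_vee_left' B g₁) hxu
    have hvBY : S.le v (B*Y) := S.aux_le_trans hvu hu
    rw [hvBx₁] at hvBY
    exact (S.aux_le_cancel B).1 hvBY
  -- closing: B ≼ x^k (B Y)
  have hclose : ∀ i : ℕ, S.le B (x^i * v) := by
    intro i
    induction i with
    | zero => rw [pow_zero, one_mul]; exact hBv
    | succ m ih =>
      apply S.aux_le_trans ih
      have h1 : S.le (x^(m+1) * Bt) (x^(m+1) * v) := (S.aux_le_cancel _).2 hBtv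
      rw [show x^m * v = x^(m+1) * Bt from by rw [hvxBt, pow_succ]; group] at *
      exact h1
  have hfinal : S.le B (x^k * (B*Y)) := by
    have h1 := hclose k
    rw [hvBx₁] at h1
    apply S.aux_le_trans h1
    have h2 : S.le (B*x₁) (B*Y) := (S.aux_le_cancel B).2 hx₁Y
    exact (S.aux_le_cancel (x^k)).2 h2
  exact hfinal

end GarsideStructure

end HeartLemma

section HeadLemma

namespace GarsideStructure

variable {G : Type*} [Group G] (S : GarsideStructure G)

/-- Local-to-global: the head of a left normal form is the gcd with `Δ`. -/
lemma aux_head_wedge : ∀ (l : List G) (a : G), (∀ b ∈ a :: l, S.IsSimple b) →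
    List.Chain' S.LeftWeighted (a :: l) → S.wedge ((a :: l).prod) S.Δ = a := by
  intro l
  induction l with
  | nil =>
    intro a hfac _
    have ha : S.IsSimple a := hfac a (by simp)
    rw [List.prod_cons, List.prod_nil, mul_one]
    exact S.aux_le_antisymm (S.aux_wedge_le_left' a S.Δ)
      (S.aux_le_wedge' (S.aux_le_refl a) ha.2)
  | cons b l' ih =>
    intro a hfac hch
    have ha : S.IsSimple a := hfac a (by simp)
    have hb : S.IsSimple b := hfac b (by simp)
    have hab : S.LeftWeighted a b := (List.isChain_cons_cons.mp hch).1
    have hch' : List.Chain' S.LeftWeighted (b :: l') := (List.isChain_cons_cons.mp hch).2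
    have hIH : S.wedge ((b :: l').prod) S.Δ = b :=
      ih b (fun c hc => hfac c (by simp at hc ⊢; tauto)) hch'
    have hprodP : (b :: l').prod ∈ S.P :=
      S.aux_prod_mem (fun c hc => (hfac c (by simp at hc ⊢; tauto)).1)
    rw [List.prod_cons]
    set V := (b :: l').prod with hV
    set D := S.wedge (a * V) S.Δ with hD
    have haD : S.le a D :=
      S.aux_le_wedge' (S.aux_le_mul_right hprodP) ha.2
    set E := S.vee D a with hE
    have hE1 : S.le E (a * V) :=
      S.aux_vee_le' (S.aux_wedge_le_left' _ _) (S.aux_le_mul_right hprodP)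
    have hE2 : S.le E S.Δ :=
      S.aux_vee_le' (S.aux_wedge_le_right' _ _) ha.2
    have haE : S.le a E := S.aux_le_vee_right' D a
    set u := a⁻¹ * E with hu
    have huP : u ∈ S.P := haE
    have hau : a * u = E := by rw [hu]; group
    have hu1 : S.le u V := by
      have := hE1
      rw [← hau] at this
      exact (S.aux_le_cancel a).1 this
    have hu2 : S.le u (a⁻¹ * S.Δ) := by
      unfold GarsideStructure.le
      unfold GarsideStructure.le at hE2
      rwa [show u⁻¹ * (a⁻¹ * S.Δ) = E⁻¹ * S.Δ from by rw [hu]; group]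
    have hu3 : S.le u S.Δ := S.aux_le_trans hu2 (S.aux_dl_le_delta ha)
    have hub : S.le u b := by
      rw [← hIH]
      exact S.aux_le_wedge' hu1 hu3
    have hEab : S.le E (a * b) := by
      rw [← hau]
      exact (S.aux_le_cancel a).2 hub
    have hEa : S.le E a := by
      rw [hab]
      exact S.aux_le_wedge' hEab hE2
    have hDa : S.le D a := S.aux_le_trans (S.aux_le_vee_left' D a) hEa
    exact S.aux_le_antisymm hDa haD

/-- Extract the last left-weighted pair from the chain `x :: (replicate k x ++ [B])`. -/
lemma aux_chain_last {x B : G} : ∀ (k : ℕ),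
    List.Chain' S.LeftWeighted (x :: (List.replicate k x ++ [B])) → S.LeftWeighted x B := by
  intro k
  induction k with
  | zero =>
    intro h
    simp only [List.replicate, List.nil_append] at h
    exact (List.isChain_cons_cons.mp h).1
  | succ m ih =>
    intro h
    rw [List.replicate_succ, List.cons_append] at h
    exact ih (List.isChain_cons_cons.mp h).2

end GarsideStructure

end HeadLemma

/-- **Proposition 7.1** (Orevkov): in a square free symmetric homogeneous Garside
structure of finite type, let `k ≥ 1`, let `A` be simple with `A ∉ {1, δ}`, `B = ∂A`
(i.e. `AB = δ`), and let `x` be an atom such that `A · x^k · B` is in left normal form.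
Set `X = A x^k B` and let `Y ∈ G` with `inf Y = 0`.  Then either `δ ≼ XY`, or
`ι(XY) = A`. -/
theorem statement19 {G : Type*} [Group G] (S : GarsideStructureNF G)
    (hft : S.FiniteType) (hsym : S.IsSymmetric) (hhom : S.Homogeneous)
    (hsf : S.SquareFree)
    (k : ℕ) (hk : 1 ≤ k) (A B x : G)
    (hA : S.IsSimple A) (hA1 : A ≠ 1) (hAΔ : A ≠ S.Δ)
    (hB : B = A⁻¹ * S.Δ) (hx : S.IsAtom' x)
    (hnfInf : S.nfInf (A * x ^ k * B) = 0)
    (hnfWord : S.nfWord (A * x ^ k * B) = A :: (List.replicate k x ++ [B]))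
    (Y : G) (hY : S.nfInf Y = 0) :
    S.le S.Δ (A * x ^ k * B * Y) ∨ S.iota (A * x ^ k * B * Y) = A := by
  classical
  set T := S.toGarsideStructure with hTdef
  -- basic simplicity facts
  have hBP : B ∈ T.P := by rw [hB]; exact hA.2
  have hBΔ : T.le B S.Δ := by rw [hB]; exact T.aux_dl_le_delta hA
  have hBs : T.IsSimple B := ⟨hBP, hBΔ⟩
  have hxmem : x ∈ S.nfWord (A * x ^ k * B) := by
    rw [hnfWord]
    exact List.mem_cons_of_mem _ (List.mem_append_left _
      (List.mem_replicate.mpr ⟨by omega, rfl⟩))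
  have hxs : T.IsSimple x := (S.nf_factors (A * x ^ k * B) x hxmem).1
  -- extract left-weighted pairs
  have hchain : List.Chain' T.LeftWeighted (A :: (List.replicate k x ++ [B])) := by
    have := S.nf_chain (A * x ^ k * B)
    rwa [hnfWord] at this
  obtain ⟨k', rfl⟩ : ∃ k', k = k' + 1 := ⟨k - 1, (Nat.succ_pred_eq_of_pos hk).symm⟩
  rw [List.replicate_succ, List.cons_append] at hchain
  have hLWAx : T.LeftWeighted A x := (List.isChain_cons_cons.mp hchain).1
  have hLWxB : T.LeftWeighted x B :=
    T.aux_chain_last k' (List.isChain_cons_cons.mp hchain).2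
  have hxB : T.wedge x B = 1 := by
    have := T.aux_lw_wedge hA hxs.1 hLWAx
    rwa [← hB] at this
  have hBdx : T.wedge B (x⁻¹ * S.Δ) = 1 := T.aux_lw_wedge hxs hBs.1 hLWxB
  -- Y is positive
  have hYP : Y ∈ T.P := by
    have h := S.nf_prod Y
    rw [hY, zpow_zero, one_mul] at h
    rw [h]
    exact T.aux_prod_mem (fun a ha => (S.nf_factors Y a ha).1.1)
  -- notation
  set Z := A * x ^ (k' + 1) * B * Y with hZdef
  set W := x ^ (k' + 1) * (B * Y) with hWdef
  have hZW : Z = A * W := by rw [hZdef, hWdef]; group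
  have hWP : W ∈ T.P := by
    rw [hWdef]
    exact T.mul_mem (T.aux_pow_mem hxs.1 _) (T.mul_mem hBP hYP)
  have hZP : Z ∈ T.P := by rw [hZW]; exact T.mul_mem hA.1 hWP
  have hAB : A * B = S.Δ := by rw [hB]; group; rfl
  by_cases hDZ : S.le S.Δ Z
  · exact Or.inl hDZ
  right
  -- heart: B ∧ W = 1
  have hwBW : T.wedge B W = 1 := by
    by_contra hne
    apply hDZ
    have hzP : T.wedge B W ∈ T.P := T.aux_wedge_mem hBP hWP
    have hBW : T.le B W :=
      T.aux_heart hsym hhom hsf x B hx hxs hBs hxB hBdx (k' + 1) (by omega) Y hYP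
        (T.wedge B W) hzP hne (T.aux_wedge_le_left' B W) (T.aux_wedge_le_right' B W)
    show S.Δ⁻¹ * Z ∈ T.P
    rw [hZW, show S.Δ⁻¹ * (A * W) = (A * B)⁻¹ * (A * W) from by rw [hAB],
      show (A * B)⁻¹ * (A * W) = B⁻¹ * W from by group]
    exact hBW
  -- the gcd of Z with Δ is A
  have hCA : T.wedge Z S.Δ = A := by
    have hAZ : T.le A Z := by
      show A⁻¹ * Z ∈ T.P
      rw [hZW, show A⁻¹ * (A * W) = W from by group]
      exact hWP
    have hAE : T.le A (T.wedge Z S.Δ) := T.aux_le_wedge' hAZ hA.2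
    set u := A⁻¹ * T.wedge Z S.Δ with hu
    have huP : u ∈ T.P := hAE
    have hAu : A * u = T.wedge Z S.Δ := by rw [hu]; group
    have hu1 : T.le u W := by
      have h1 : T.le (T.wedge Z S.Δ) Z := T.aux_wedge_le_left' Z S.Δ
      rw [← hAu, hZW] at h1
      exact (T.aux_le_cancel A).1 h1
    have hu2 : T.le u B := by
      have h2 : T.le (T.wedge Z S.Δ) S.Δ := T.aux_wedge_le_right' Z S.Δ
      rw [← hAu, ← hAB] at h2
      exact (T.aux_le_cancel A).1 h2
    have hu0 : u = 1 := by
      apply T.aux_eq_one_of_le_one huP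
      rw [← hwBW]
      exact T.aux_le_wedge' hu2 hu1
    rw [← hAu, hu0, mul_one]
  -- normal form analysis
  have hprod := S.nf_prod Z
  obtain ⟨p, hpdef⟩ : ∃ p, S.nfInf Z = p := ⟨_, rfl⟩
  rw [hpdef] at hprod
  rcases hw : S.nfWord Z with _ | ⟨h, tl⟩
  · -- empty normal form word
    exfalso
    rw [hw, List.prod_nil, mul_one] at hprod
    rcases le_or_gt 1 p with hp | hp
    · apply hDZ
      show S.Δ⁻¹ * Z ∈ T.P
      rw [hprod, show S.Δ⁻¹ * S.Δ ^ p = S.Δ ^ (p - 1) from by group]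
      exact T.aux_zpow_mem S.Δ_mem (by omega)
    · have hZinv : Z⁻¹ ∈ T.P := by
        rw [hprod, ← zpow_neg]
        exact T.aux_zpow_mem S.Δ_mem (by omega)
      have hZ1 : Z = 1 := T.inter_inv Z hZP hZinv
      rw [hZW] at hZ1
      have hAinv : A⁻¹ = W := inv_eq_of_mul_eq_one_right hZ1
      exact hA1 (T.inter_inv A hA.1 (hAinv ▸ hWP))
  · -- nonempty normal form word
    have hfacZ : ∀ b ∈ h :: tl, T.IsSimple b := by
      intro b hb
      have := S.nf_factors Z b (by rw [hw]; exact hb)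
      exact this.1
    have hprodP : (h :: tl).prod ∈ T.P := T.aux_prod_mem (fun b hb => (hfacZ b hb).1)
    have hchZ : List.Chain' T.LeftWeighted (h :: tl) := by
      have := S.nf_chain Z
      rwa [hw] at this
    have hhd : T.wedge ((h :: tl).prod) S.Δ = h := T.aux_head_wedge tl h hfacZ hchZ
    rw [hw] at hprod
    rcases lt_trichotomy p 0 with hp | hp | hp
    · -- negative infimum: impossible
      exfalso
      have hpr : (h :: tl).prod = S.Δ ^ (-p) * Z := by
        rw [hprod]; group
      have hdp : T.le S.Δ ((h :: tl).prod) := by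
        show S.Δ⁻¹ * (h :: tl).prod ∈ T.P
        rw [hpr, show S.Δ⁻¹ * (S.Δ ^ (-p) * Z) = S.Δ ^ (-p - 1) * Z from by group]
        exact T.mul_mem (T.aux_zpow_mem S.Δ_mem (by omega)) hZP
      have hΔh : T.le S.Δ h := by
        rw [← hhd]
        exact T.aux_le_wedge' hdp (T.aux_le_refl S.Δ)
      have : h = S.Δ := T.aux_le_antisymm (hfacZ h (by simp)).2 hΔh
      exact (S.nf_factors Z h (by rw [hw]; simp)).2.2 this
    · -- infimum zero: the head is A
      have hZprod : Z = (h :: tl).prod := by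
        rw [hprod, hp, zpow_zero, one_mul]
      have hhA : h = A := by
        rw [← hZprod, hCA] at hhd
        exact hhd.symm
      show S.iota Z = A
      rw [GarsideStructureNF.iota, hpdef, hp, hw]
      simp only [zpow_zero, neg_zero, one_mul, mul_one, List.headD_cons]
      exact hhA
    · -- positive infimum: Δ ≼ Z, contradiction
      exfalso
      apply hDZ
      show S.Δ⁻¹ * Z ∈ T.P
      rw [hprod, show S.Δ⁻¹ * (S.Δ ^ p * (h :: tl).prod) =
        S.Δ ^ (p - 1) * (h :: tl).prod from by group]
      exact T.mul_mem (T.aux_zpow_mem S.Δ_mem (by omega)) hprodP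
end
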